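/- arXiv:2103.03432 — 5 statements merged into one kernel-verified Lean document; each statement's English description precedes it below -/
import Mathlib

section
/- Let S ⊆ ℝ^n, let (Ω, F, ℙ) be a probability space, let W be a measurable space, let F : S × W → S be Borel measurable, and let (w_t)_{t∈ℕ} be a sequence of mutually independent W-valued random variables on Ω. Let x(t) be the random solution of the stochastic recursion x(t+1) = F(x(t), w_t) with deterministic initial condition x(0) ∈ S. Suppose there exist measurable functions V_t : S → [0, ∞), t ∈ ℕ, and a constant c ∈ (0, 1) such that E[V_{t+1}(F(x, w_t))] ≤ c · V_t(x) for every x ∈ S and every t ∈ ℕ. Then V_t(x(t)) → 0 as t → ∞ almost surely. -/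
open MeasureTheory ProbabilityTheory Filter

/-- Auxiliary iterate: the solution of the recursion as a function of the first `t` noises. -/
def stochLyapIter {S W : Type*} (F : S × W → S) (x₀ : S) : ∀ t : ℕ, (Fin t → W) → S
  | 0, _ => x₀
  | (t + 1), v => F (stochLyapIter F x₀ t (fun i => v i.castSucc), v (Fin.last t))

lemma stochLyapIter_measurable {S W : Type*} [MeasurableSpace S] [MeasurableSpace W]
    (F : S × W → S) (hF : Measurable F) (x₀ : S) :
    ∀ t, Measurable (stochLyapIter F x₀ t) := by
  intro t
  induction t with
  | zero => exact measurable_const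
  | succ t ih =>
    exact hF.comp ((ih.comp (measurable_pi_lambda _ fun i => measurable_pi_apply _)).prodMk
      (measurable_pi_apply _))

/-- Let `S ⊆ ℝ^n`, let `(Ω, F, ℙ)` be a probability space, `W` a
measurable space, `F : S × W → S` Borel measurable, and `(w_t)` a sequence of mutually
independent `W`-valued random variables.  Let `x(t)` solve `x(t+1) = F(x(t), w_t)` with
deterministic `x(0) = x₀ ∈ S`.  If there are measurable `V_t : S → [0, ∞)` and `c ∈ (0,1)`
with `E[V_{t+1}(F(x, w_t))] ≤ c V_t(x)` for all `x ∈ S` and `t`, then `V_t(x(t)) → 0`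
almost surely. -/
theorem stochastic_lyapunov_decay
    {n : ℕ} (S : Set (EuclideanSpace ℝ (Fin n)))
    {Ω : Type*} [MeasurableSpace Ω] (μ : Measure Ω) [IsProbabilityMeasure μ]
    {W : Type*} [MeasurableSpace W]
    (F : S × W → S) (hF : Measurable F)
    (w : ℕ → Ω → W) (hw_meas : ∀ t, Measurable (w t))
    (hw_indep : iIndepFun w μ)
    (x : ℕ → Ω → S) (x₀ : S) (hx0 : ∀ ω, x 0 ω = x₀)
    (hx_rec : ∀ t ω, x (t + 1) ω = F (x t ω, w t ω))
    (V : ℕ → S → ℝ)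
    (hV_meas : ∀ t, Measurable (V t))
    (hV_nonneg : ∀ t (z : S), 0 ≤ V t z)
    (hV_int : ∀ (z : S) (t : ℕ), Integrable (fun ω => V (t + 1) (F (z, w t ω))) μ)
    (c : ℝ) (hc : c ∈ Set.Ioo (0 : ℝ) 1)
    (h_drift : ∀ (z : S) (t : ℕ),
      (∫ ω, V (t + 1) (F (z, w t ω)) ∂μ) ≤ c * V t z) :
    ∀ᵐ ω ∂μ, Tendsto (fun t => V t (x t ω)) atTop (nhds 0) := by
  -- measurability of x t
  have hx_meas : ∀ t, Measurable (x t) := by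
    intro t
    induction t with
    | zero =>
      have : x 0 = fun _ => x₀ := funext hx0
      rw [this]; exact measurable_const
    | succ t ih =>
      have : x (t + 1) = fun ω => F (x t ω, w t ω) := funext (hx_rec t)
      rw [this]; exact hF.comp (ih.prodMk (hw_meas t))
  -- x t as a function of the first t noises
  have hx_iter : ∀ t ω, x t ω = stochLyapIter F x₀ t (fun i => w i ω) := by
    intro t
    induction t with
    | zero => intro ω; exact hx0 ω
    | succ t ih =>
      intro ω
      rw [hx_rec t ω, ih ω]
      simp only [stochLyapIter]
      congr 1
  -- independence of x t and w t
  have hindep : ∀ t, IndepFun (x t) (w t) μ := by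
    intro t
    have h1 := hw_indep.indepFun_finset (Finset.range t) {t}
      (by simp [Finset.disjoint_singleton_right]) hw_meas
    have hφ : Measurable (fun v : (↑(Finset.range t) : Finset ℕ) → W =>
        stochLyapIter F x₀ t (fun i : Fin t => v ⟨i, Finset.mem_range.mpr i.isLt⟩)) :=
      (stochLyapIter_measurable F hF x₀ t).comp
        (measurable_pi_lambda _ fun i => measurable_pi_apply _)
    have hψ : Measurable (fun v : (↑({t} : Finset ℕ) : Finset ℕ) → W =>
        v ⟨t, Finset.mem_singleton_self t⟩) := measurable_pi_apply _
    have h2 := h1.comp hφ hψ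
    have hx_eq : x t = (fun v : (↑(Finset.range t) : Finset ℕ) → W =>
        stochLyapIter F x₀ t (fun i : Fin t => v ⟨i, Finset.mem_range.mpr i.isLt⟩)) ∘
        (fun ω (i : (↑(Finset.range t) : Finset ℕ)) => w i ω) := by
      funext ω; exact hx_iter t ω
    have hw_eq : w t = (fun v : (↑({t} : Finset ℕ) : Finset ℕ) → W =>
        v ⟨t, Finset.mem_singleton_self t⟩) ∘
        (fun ω (i : (↑({t} : Finset ℕ) : Finset ℕ)) => w i ω) := rfl
    rw [hx_eq, hw_eq]
    exact h2
  -- L t := lintegral of V t (x t)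
  set L : ℕ → ENNReal := fun t => ∫⁻ ω, ENNReal.ofReal (V t (x t ω)) ∂μ with hL
  have hPx : ∀ t, IsProbabilityMeasure (μ.map (x t)) := fun t =>
    Measure.isProbabilityMeasure_map (hx_meas t).aemeasurable
  have hPw : ∀ t, IsProbabilityMeasure (μ.map (w t)) := fun t =>
    Measure.isProbabilityMeasure_map (hw_meas t).aemeasurable
  -- key contraction step
  have key : ∀ t, L (t + 1) ≤ ENNReal.ofReal c * L t := by
    intro t
    have hPx' := hPx t
    have hPw' := hPw t
    set f : S × W → ENNReal := fun p => ENNReal.ofReal (V (t + 1) (F p)) with hf_def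
    have hf : Measurable f := ENNReal.measurable_ofReal.comp ((hV_meas (t + 1)).comp hF)
    have hmap : μ.map (fun ω => (x t ω, w t ω)) = (μ.map (x t)).prod (μ.map (w t)) :=
      (indepFun_iff_map_prod_eq_prod_map_map (hx_meas t).aemeasurable
        (hw_meas t).aemeasurable).mp (hindep t)
    have inner_bound : ∀ a : S,
        (∫⁻ b, f (a, b) ∂(μ.map (w t))) ≤ ENNReal.ofReal c * ENNReal.ofReal (V t a) := by
      intro a
      have h1 : (∫⁻ b, f (a, b) ∂(μ.map (w t))) = ∫⁻ ω, f (a, w t ω) ∂μ :=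
        lintegral_map (hf.comp measurable_prodMk_left) (hw_meas t)
      have h2 : (∫⁻ ω, f (a, w t ω) ∂μ) =
          ENNReal.ofReal (∫ ω, V (t + 1) (F (a, w t ω)) ∂μ) :=
        (ofReal_integral_eq_lintegral_ofReal (hV_int a t)
          (Filter.Eventually.of_forall fun ω => hV_nonneg _ _)).symm
      rw [h1, h2, ← ENNReal.ofReal_mul hc.1.le]
      exact ENNReal.ofReal_le_ofReal (h_drift a t)
    calc L (t + 1) = ∫⁻ ω, f (x t ω, w t ω) ∂μ := by
          simp only [hL, hf_def]
          exact lintegral_congr fun ω => by rw [hx_rec t ω]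
      _ = ∫⁻ p, f p ∂(μ.map (fun ω => (x t ω, w t ω))) :=
          (lintegral_map hf ((hx_meas t).prodMk (hw_meas t))).symm
      _ = ∫⁻ p, f p ∂((μ.map (x t)).prod (μ.map (w t))) := by rw [hmap]
      _ = ∫⁻ a, ∫⁻ b, f (a, b) ∂(μ.map (w t)) ∂(μ.map (x t)) :=
          lintegral_prod f hf.aemeasurable
      _ ≤ ∫⁻ a, ENNReal.ofReal c * ENNReal.ofReal (V t a) ∂(μ.map (x t)) :=
          lintegral_mono fun a => inner_bound a
      _ = ENNReal.ofReal c * ∫⁻ a, ENNReal.ofReal (V t a) ∂(μ.map (x t)) :=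
          lintegral_const_mul _ (ENNReal.measurable_ofReal.comp (hV_meas t))
      _ = ENNReal.ofReal c * L t := by
          rw [hL]
          congr 1
          exact lintegral_map (ENNReal.measurable_ofReal.comp (hV_meas t)) (hx_meas t)
  -- geometric bound
  have Lbound : ∀ t, L t ≤ (ENNReal.ofReal c) ^ t * ENNReal.ofReal (V 0 x₀) := by
    intro t
    induction t with
    | zero =>
      simp only [hL, pow_zero, one_mul]
      have : ∀ ω, ENNReal.ofReal (V 0 (x 0 ω)) = ENNReal.ofReal (V 0 x₀) := fun ω => by
        rw [hx0 ω]
      rw [lintegral_congr this, lintegral_const, measure_univ, mul_one]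
    | succ t ih =>
      calc L (t + 1) ≤ ENNReal.ofReal c * L t := key t
        _ ≤ ENNReal.ofReal c * ((ENNReal.ofReal c) ^ t * ENNReal.ofReal (V 0 x₀)) := by
            exact mul_le_mul_right ih _
        _ = (ENNReal.ofReal c) ^ (t + 1) * ENNReal.ofReal (V 0 x₀) := by ring
  -- Borel-Cantelli for each ε = 1/(k+1)
  have hc1 : ENNReal.ofReal c < 1 := by
    rw [← ENNReal.ofReal_one]
    exact ENNReal.ofReal_lt_ofReal_iff_of_nonneg hc.1.le |>.mpr hc.2
  have hBC : ∀ k : ℕ, ∀ᵐ ω ∂μ, {t : ℕ | (1 : ℝ) / (k + 1) ≤ V t (x t ω)}.Finite := by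
    intro k
    set ε : ℝ := (1 : ℝ) / (k + 1) with hε
    have hεpos : 0 < ε := by positivity
    set A : ℕ → Set Ω := fun t => {ω | ε ≤ V t (x t ω)} with hA
    have hsum : (∑' t, μ (A t)) ≠ ⊤ := by
      have hmark : ∀ t, μ (A t) ≤
          ((ENNReal.ofReal c) ^ t * ENNReal.ofReal (V 0 x₀)) / ENNReal.ofReal ε := by
        intro t
        have hAeq : A t = {ω | ENNReal.ofReal ε ≤ ENNReal.ofReal (V t (x t ω))} := by
          ext ω
          simp only [hA, Set.mem_setOf_eq]
          rw [ENNReal.ofReal_le_ofReal_iff (hV_nonneg _ _)]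
        rw [hAeq]
        refine le_trans (meas_ge_le_lintegral_div
          ((ENNReal.measurable_ofReal.comp ((hV_meas t).comp (hx_meas t))).aemeasurable)
          (ENNReal.ofReal_pos.mpr hεpos).ne' ENNReal.ofReal_ne_top) ?_
        exact ENNReal.div_le_div_right (Lbound t) _
      refine ne_top_of_le_ne_top ?_ (ENNReal.tsum_le_tsum hmark)
      simp only [div_eq_mul_inv]
      rw [ENNReal.tsum_mul_right, ENNReal.tsum_mul_right, ENNReal.tsum_geometric]
      refine ENNReal.mul_ne_top (ENNReal.mul_ne_top ?_ ENNReal.ofReal_ne_top)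
        (ENNReal.inv_ne_top.mpr (ENNReal.ofReal_pos.mpr hεpos).ne')
      exact ENNReal.inv_ne_top.mpr (by simp [tsub_eq_zero_iff_le, hc1.not_ge])
    exact ae_finite_setOf_mem hsum
  filter_upwards [ae_all_iff.mpr hBC] with ω hω
  -- conclude tendsto from the eventual bounds
  rw [Metric.tendsto_atTop]
  intro ε hεpos
  obtain ⟨k, hk⟩ := exists_nat_one_div_lt hεpos
  have hfin := (hω k).subset (Set.Subset.refl _)
  have hev : ∀ᶠ t in atTop, t ∉ {t : ℕ | (1 : ℝ) / (k + 1) ≤ V t (x t ω)} := by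
    rw [← Nat.cofinite_eq_atTop]
    exact (hω k).eventually_cofinite_notMem
  rw [Filter.eventually_atTop] at hev
  obtain ⟨N, hN⟩ := hev
  refine ⟨N, fun t ht => ?_⟩
  have := hN t ht
  simp only [Set.mem_setOf_eq, not_le] at this
  rw [Real.dist_eq, sub_zero, abs_of_nonneg (hV_nonneg _ _)]
  calc V t (x t ω) < 1 / (k + 1) := this
    _ < ε := by exact_mod_cast hk
end

section
/- Let G be a finite simple graph on the vertex set {1, …, N} with edge set E and Laplacian matrix L, and let M be a positive integer. Let c be a random variable taking values in the maps E → {1, …, M} such that (a) almost surely, any two distinct adjacent edges receive different colors, and (b) ℙ(c(e) = k) = 1/M for every edge e ∈ E and every k ∈ {1, …, M}. For k ∈ {1, …, M}, let L^k denote the random channel Laplacian, i.e., the Laplacian of the spanning subgraph of G consisting of the edges e with c(e) = k. Then for every k ∈ {1, …, M}: E[L^k] = (1/M)·L and E[(L^k)²] = (2/M)·L. -/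
open Matrix MeasureTheory

/-- The Laplacian matrix of a finite simple graph on `Fin N`. -/
def lapMat {N : ℕ} (G : SimpleGraph (Fin N)) [DecidableRel G.Adj] :
    Matrix (Fin N) (Fin N) ℝ :=
  Matrix.of fun i j =>
    if i = j then (G.degree i : ℝ) else if G.Adj i j then -1 else 0

/-- Given a coloring `col` of the edges of `G` with colors in `Fin M`, the channel
Laplacian `L^k` is the Laplacian of the spanning subgraph of `G` consisting of the
edges colored `k`. -/
def chLap {N M : ℕ} (G : SimpleGraph (Fin N)) [DecidableRel G.Adj]
    (col : Sym2 (Fin N) → Fin M) (k : Fin M) :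
    Matrix (Fin N) (Fin N) ℝ :=
  Matrix.of fun i j =>
    if i = j then ∑ v ∈ G.neighborFinset i, (if col s(i, v) = k then (1 : ℝ) else 0)
    else if G.Adj i j ∧ col s(i, j) = k then -1 else 0

section Det
variable {N M : ℕ} (G : SimpleGraph (Fin N)) [DecidableRel G.Adj]
    (col : Sym2 (Fin N) → Fin M) (k : Fin M)

lemma filter_card_le_one
    (hp : ∀ e ∈ G.edgeSet, ∀ e' ∈ G.edgeSet, e ≠ e' → (∃ v, v ∈ e ∧ v ∈ e') → col e ≠ col e')
    (i : Fin N) :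
    ((G.neighborFinset i).filter (fun v => col s(i, v) = k)).card ≤ 1 := by
  apply Finset.card_le_one.mpr
  intro v hv w hw
  simp only [Finset.mem_filter, SimpleGraph.mem_neighborFinset] at hv hw
  by_contra hvw
  exact hp s(i, v) (by simpa using hv.1) s(i, w) (by simpa using hw.1)
    (by have := hw.1.ne; simp [Sym2.eq_iff]; tauto) ⟨i, by simp⟩ (hv.2.trans hw.2.symm)

lemma filter_eq_singleton
    (hp : ∀ e ∈ G.edgeSet, ∀ e' ∈ G.edgeSet, e ≠ e' → (∃ v, v ∈ e ∧ v ∈ e') → col e ≠ col e')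
    {i j : Fin N} (hij : G.Adj i j) (hcol : col s(i, j) = k) :
    ((G.neighborFinset i).filter (fun v => col s(i, v) = k)) = {j} := by
  apply Finset.eq_singleton_iff_unique_mem.mpr
  constructor
  · simp [SimpleGraph.mem_neighborFinset, hij, hcol]
  · intro v hv
    simp only [Finset.mem_filter, SimpleGraph.mem_neighborFinset] at hv
    by_contra hvj
    exact hp s(i, v) (by simpa using hv.1) s(i, j) (by simpa using hij)
      (by have := hij.ne; simp [Sym2.eq_iff]; tauto) ⟨i, by simp⟩ (hv.2.trans hcol.symm)

lemma chLap_diag (i : Fin N) :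
    chLap G col k i i = ((G.neighborFinset i).filter (fun v => col s(i, v) = k)).card := by
  simp [chLap, Finset.sum_boole]

lemma chLap_sq
    (hp : ∀ e ∈ G.edgeSet, ∀ e' ∈ G.edgeSet, e ≠ e' → (∃ v, v ∈ e ∧ v ∈ e') → col e ≠ col e')
    (i j : Fin N) :
    (chLap G col k * chLap G col k) i j = 2 * chLap G col k i j := by
  rw [Matrix.mul_apply]
  by_cases hij : i = j
  · subst hij
    rw [← Finset.sum_erase_add _ _ (Finset.mem_univ i)]
    have herase : ∀ v ∈ Finset.univ.erase i,
        chLap G col k i v * chLap G col k v i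
          = if G.Adj i v ∧ col s(i, v) = k then 1 else 0 := by
      intro v hv
      have hvi : v ≠ i := Finset.ne_of_mem_erase hv
      have h1 : chLap G col k i v = if G.Adj i v ∧ col s(i, v) = k then -1 else 0 := by
        simp [chLap, Ne.symm hvi]
      have h2 : chLap G col k v i = if G.Adj i v ∧ col s(i, v) = k then -1 else 0 := by
        simp only [chLap, Matrix.of_apply, if_neg hvi]
        rw [Sym2.eq_swap]
        congr 1
        simp [G.adj_comm]
      rw [h1, h2]
      by_cases h : G.Adj i v ∧ col s(i, v) = k <;> simp [h]
    have hsub : G.neighborFinset i ⊆ Finset.univ.erase i := by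
      intro v hv
      rw [SimpleGraph.mem_neighborFinset] at hv
      exact Finset.mem_erase.mpr ⟨hv.ne', Finset.mem_univ v⟩
    have hzero : ∀ v ∈ Finset.univ.erase i, v ∉ G.neighborFinset i →
        (if G.Adj i v ∧ col s(i, v) = k then (1 : ℝ) else 0) = 0 := by
      intro v _ hnv
      rw [SimpleGraph.mem_neighborFinset] at hnv
      simp [hnv]
    have hsum : ∑ v ∈ Finset.univ.erase i, chLap G col k i v * chLap G col k v i
        = (((G.neighborFinset i).filter (fun v => col s(i, v) = k)).card : ℝ) := by
      rw [Finset.sum_congr rfl herase, ← Finset.sum_subset hsub hzero]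
      simp only [Finset.sum_boole]
      congr 2
      apply Finset.filter_congr
      intro v hv
      rw [SimpleGraph.mem_neighborFinset] at hv
      simp [hv]
    rw [hsum, chLap_diag]
    rcases Nat.le_one_iff_eq_zero_or_eq_one.mp (filter_card_le_one G col k hp i) with h | h <;>
      rw [h] <;> norm_num
  · rw [← Finset.sum_erase_add _ _ (Finset.mem_univ i),
      ← Finset.sum_erase_add _ _ (Finset.mem_erase.mpr ⟨Ne.symm hij, Finset.mem_univ j⟩)]
    have hmid : ∀ v ∈ (Finset.univ.erase i).erase j,
        chLap G col k i v * chLap G col k v j = 0 := by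
      intro v hv
      have hvj : v ≠ j := Finset.ne_of_mem_erase hv
      have hvi : v ≠ i := Finset.ne_of_mem_erase (Finset.mem_of_mem_erase hv)
      by_cases h1 : G.Adj i v ∧ col s(i, v) = k
      · by_cases h2 : G.Adj v j ∧ col s(v, j) = k
        · exfalso
          refine hp s(i, v) (by simpa using h1.1) s(v, j) (by simpa using h2.1) ?_
            ⟨v, by simp⟩ (h1.2.trans h2.2.symm)
          have := h1.1.ne
          simp only [Sym2.eq_iff, ne_eq, not_or]
          constructor
          · rintro ⟨h3, h4⟩; exact hvj h4
          · rintro ⟨h3, h4⟩; exact hij h3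
        · simp [chLap, hvj, h2]
      · simp [chLap, Ne.symm hvi, h1]
    rw [Finset.sum_eq_zero hmid, zero_add]
    by_cases h : G.Adj i j ∧ col s(i, j) = k
    · have haij : chLap G col k i j = -1 := by simp [chLap, hij, h]
      have hii : chLap G col k i i = 1 := by
        rw [chLap_diag, filter_eq_singleton G col k hp h.1 h.2]
        simp
      have hjj : chLap G col k j j = 1 := by
        rw [chLap_diag, filter_eq_singleton G col k hp h.1.symm (by rw [Sym2.eq_swap]; exact h.2)]
        simp
      rw [haij, hii, hjj]
      norm_num
    · have haij : chLap G col k i j = 0 := by simp [chLap, hij, h]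
      rw [haij]
      ring

end Det

/-- Let `G` be a finite simple graph on `{1, …, N}` with Laplacian `L`,
`M ≥ 1`, and let `c` be a random edge coloring of `G` with colors `{1, …, M}` such that
(a) almost surely distinct adjacent edges get different colors and (b) each edge gets each
color with probability `1/M`.  Then the random channel Laplacians `L^k` satisfy
`E[L^k] = (1/M) L` and `E[(L^k)²] = (2/M) L` (expectations entrywise). -/
theorem channel_laplacian_moments
    {N : ℕ} (G : SimpleGraph (Fin N)) [DecidableRel G.Adj]
    (M : ℕ) (hM : 0 < M)
    {Ω : Type*} [MeasurableSpace Ω] (μ : Measure Ω) [IsProbabilityMeasure μ]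
    (c : Ω → Sym2 (Fin N) → Fin M)
    (hc_meas : ∀ e : Sym2 (Fin N), Measurable fun ω => c ω e)
    (hc_proper : ∀ᵐ ω ∂μ, ∀ e ∈ G.edgeSet, ∀ e' ∈ G.edgeSet, e ≠ e' →
      (∃ v : Fin N, v ∈ e ∧ v ∈ e') → c ω e ≠ c ω e')
    (hc_unif : ∀ e ∈ G.edgeSet, ∀ k : Fin M,
      μ {ω | c ω e = k} = 1 / (M : ENNReal)) :
    ∀ (k : Fin M) (i j : Fin N),
      (∫ ω, chLap G (c ω) k i j ∂μ) = (1 / (M : ℝ)) * lapMat G i j ∧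
      (∫ ω, (chLap G (c ω) k * chLap G (c ω) k) i j ∂μ) = (2 / (M : ℝ)) * lapMat G i j := by
  intro k i j
  have hmeasS : ∀ e : Sym2 (Fin N), MeasurableSet {ω | c ω e = k} :=
    fun e => hc_meas e (measurableSet_singleton k)
  have hind : ∀ e : Sym2 (Fin N),
      (fun ω => if c ω e = k then (1 : ℝ) else 0)
        = Set.indicator {ω | c ω e = k} (fun _ => (1 : ℝ)) := by
    intro e
    funext ω
    simp [Set.indicator_apply, Set.mem_setOf_eq]
  have hint : ∀ e : Sym2 (Fin N),
      Integrable (fun ω => if c ω e = k then (1 : ℝ) else 0) μ := by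
    intro e
    rw [hind e]
    exact (integrable_const (1 : ℝ)).indicator (hmeasS e)
  have hval : ∀ e ∈ G.edgeSet,
      ∫ ω, (if c ω e = k then (1 : ℝ) else 0) ∂μ = 1 / (M : ℝ) := by
    intro e he
    rw [hind e, MeasureTheory.integral_indicator_const (1 : ℝ) (hmeasS e), measureReal_def, hc_unif e he k]
    rw [ENNReal.toReal_div]
    simp
  have h1 : (∫ ω, chLap G (c ω) k i j ∂μ) = (1 / (M : ℝ)) * lapMat G i j := by
    by_cases hij : i = j
    · subst hij
      simp only [chLap, Matrix.of_apply, if_true]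
      rw [integral_finset_sum _ (fun v _ => hint s(i, v))]
      rw [Finset.sum_congr rfl (fun v hv => hval s(i, v)
        (by rw [SimpleGraph.mem_edgeSet]; exact (SimpleGraph.mem_neighborFinset G i v).mp hv))]
      rw [Finset.sum_const]
      simp only [lapMat, Matrix.of_apply, if_true, SimpleGraph.degree, nsmul_eq_mul]
      ring
    · by_cases hadj : G.Adj i j
      · have heq : (fun ω => chLap G (c ω) k i j)
            = fun ω => -(if c ω s(i, j) = k then (1 : ℝ) else 0) := by
          funext ω
          by_cases h : c ω s(i, j) = k <;> simp [chLap, hij, hadj, h]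
        rw [heq, integral_neg, hval s(i, j) (by rwa [SimpleGraph.mem_edgeSet])]
        simp [lapMat, hij, hadj]
      · have heq : (fun ω => chLap G (c ω) k i j) = fun _ => (0 : ℝ) := by
          funext ω
          simp [chLap, hij, hadj]
        rw [heq, integral_zero]
        simp [lapMat, hij, hadj]
  refine ⟨h1, ?_⟩
  have hae : (fun ω => (chLap G (c ω) k * chLap G (c ω) k) i j)
      =ᵐ[μ] fun ω => 2 * chLap G (c ω) k i j :=
    hc_proper.mono fun ω hω => chLap_sq G (c ω) k hω i j
  rw [integral_congr_ae hae, integral_const_mul, h1]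
  ring
end

section
/- Let G be a connected finite simple graph on the vertex set {1, …, N} with edge set E and Laplacian matrix L, let M be a positive integer and γ ∈ (0, 1). Let c be a random variable taking values in the maps E → {1, …, M} such that, almost surely, any two distinct adjacent edges receive different colors, and ℙ(c(e) = k) = 1/M for every edge e and every k ∈ {1, …, M}; let L^k be the Laplacian of the spanning subgraph of G consisting of the edges colored k. Let λ₂ = min{ zᵀ L z : ‖z‖ = 1, 𝟏ᵀz = 0 } be the second smallest eigenvalue of L. Then for every k ∈ {1, …, M} and every z ∈ ℝ^N with 𝟏ᵀz = 0, E[ ‖(I_N − γ·L^k) z‖² ] = zᵀ ( I_N − (2/M)(γ − γ²)·L ) z ≤ ( 1 − (2/M)(γ − γ²)·λ₂ ) · ‖z‖². -/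
open Matrix MeasureTheory

section aux
variable {N M : ℕ} (G : SimpleGraph (Fin N)) [DecidableRel G.Adj]
  (col : Sym2 (Fin N) → Fin M) (k : Fin M)

/-- Edge indicator: `1` if `{i,j}` is an edge of `G` colored `k`. -/
def chi (i j : Fin N) : ℝ := if G.Adj i j ∧ col s(i, j) = k then 1 else 0

/-- The color class of `k` is a matching. -/
def IsMatch : Prop :=
  ∀ i u v : Fin N, G.Adj i u → G.Adj i v → col s(i,u) = k → col s(i,v) = k → u = v

lemma chi_symm (i j : Fin N) : chi G col k i j = chi G col k j i := by
  unfold chi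
  rw [Sym2.eq_swap]
  congr 1
  simp [G.adj_comm i j]

lemma chi_mem (i j : Fin N) : chi G col k i j = 0 ∨ chi G col k i j = 1 := by
  unfold chi; split <;> simp

lemma chLap_eq (i j : Fin N) :
    chLap G col k i j = (if i = j then ∑ v, chi G col k i v else 0) - chi G col k i j := by
  unfold chLap chi
  by_cases h : i = j
  · subst h
    rw [Matrix.of_apply, if_pos rfl, if_pos rfl, if_neg (by simp [G.irrefl]), sub_zero]
    rw [SimpleGraph.neighborFinset_eq_filter]
    rw [Finset.sum_filter]
    congr 1; ext v
    by_cases hadj : G.Adj i v <;> simp [hadj]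
  · rw [Matrix.of_apply, if_neg h, if_neg h, zero_sub]
    split <;> simp

lemma chLap_transpose : (chLap G col k)ᵀ = chLap G col k := by
  ext i j
  rw [Matrix.transpose_apply, chLap_eq, chLap_eq, chi_symm G col k j i]
  by_cases h : i = j
  · subst h; rfl
  · rw [if_neg h, if_neg (Ne.symm h)]

variable (hm : IsMatch G col k)
include hm

lemma chi_match {i u v : Fin N} (hu : chi G col k i u = 1) (hv : chi G col k i v = 1) :
    u = v := by
  unfold chi at hu hv
  by_cases h1 : G.Adj i u ∧ col s(i,u) = k
  · by_cases h2 : G.Adj i v ∧ col s(i,v) = k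
    · exact hm i u v h1.1 h2.1 h1.2 h2.2
    · simp [h2] at hv
  · simp [h1] at hu

lemma d_mul_chi (i j : Fin N) :
    (∑ v, chi G col k i v) * chi G col k i j = chi G col k i j := by
  rcases chi_mem G col k i j with h | h
  · simp [h]
  · rw [h, mul_one, Finset.sum_eq_single j]
    · exact h
    · intro v _ hvj
      rcases chi_mem G col k i v with h' | h'
      · exact h'
      · exact absurd (chi_match G col k hm h' h) hvj
    · simp

lemma d_idem (i : Fin N) :
    (∑ v, chi G col k i v) * (∑ v, chi G col k i v) = ∑ v, chi G col k i v := by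
  by_cases h : ∀ v, chi G col k i v = 0
  · simp [Finset.sum_congr rfl (fun v _ => h v)]
  · push_neg at h
    obtain ⟨j, hj⟩ := h
    have hj1 : chi G col k i j = 1 := (chi_mem G col k i j).resolve_left hj
    have : (∑ v, chi G col k i v) = 1 := by
      rw [Finset.sum_eq_single j]
      · exact hj1
      · intro v _ hvj
        rcases chi_mem G col k i v with h' | h'
        · exact h'
        · exact absurd (chi_match G col k hm h' hj1) hvj
      · simp
    simp [this]

lemma chi_cross (i j : Fin N) :
    ∑ l, chi G col k i l * chi G col k l j
      = if i = j then ∑ v, chi G col k i v else 0 := by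
  by_cases h : i = j
  · subst h; rw [if_pos rfl]
    apply Finset.sum_congr rfl
    intro l _
    rw [chi_symm G col k l i]
    rcases chi_mem G col k i l with h' | h' <;> simp [h']
  · rw [if_neg h]
    apply Finset.sum_eq_zero
    intro l _
    rcases chi_mem G col k i l with h1 | h1
    · simp [h1]
    rcases chi_mem G col k l j with h2 | h2
    · simp [h2]
    · have h1' : chi G col k l i = 1 := by rw [← chi_symm]; exact h1
      exact absurd (chi_match G col k hm h1' h2) h

/-- For a matching, the square of the Laplacian is twice the Laplacian. -/
lemma chLap_sq_s11 : chLap G col k * chLap G col k = (2:ℝ) • chLap G col k := by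
  have hdc := d_mul_chi G col k hm
  have hdi := d_idem G col k hm
  have hcc := chi_cross G col k hm
  have hsym := chi_symm G col k
  ext i j
  rw [Matrix.mul_apply, Matrix.smul_apply, smul_eq_mul]
  have hB : ∀ a b, chLap G col k a b
      = (if a = b then ∑ v, chi G col k a v else 0) - chi G col k a b := chLap_eq G col k
  have expand : ∀ l, chLap G col k i l * chLap G col k l j
      = ((if i = l then (∑ v, chi G col k i v)
            * ((if l = j then ∑ v, chi G col k l v else 0) - chi G col k l j) else 0)
        - chi G col k i l * (if l = j then ∑ v, chi G col k l v else 0))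
        + chi G col k i l * chi G col k l j := by
    intro l
    rw [hB, hB]
    by_cases h : i = l
    · simp only [if_pos h]; ring
    · simp only [if_neg h]; ring
  rw [Finset.sum_congr rfl (fun l _ => expand l)]
  rw [Finset.sum_add_distrib, Finset.sum_sub_distrib, Finset.sum_ite_eq, hcc i j]
  have S3 : ∑ l, chi G col k i l * (if l = j then ∑ v, chi G col k l v else 0)
      = chi G col k i j := by
    have h1 : ∀ l, chi G col k i l * (if l = j then ∑ v, chi G col k l v else 0)
        = if l = j then chi G col k i l * ∑ v, chi G col k l v else 0 := by
      intro l; split <;> simp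
    rw [Finset.sum_congr rfl (fun l _ => h1 l), Finset.sum_ite_eq', if_pos (Finset.mem_univ j),
      hsym i j, mul_comm]
    exact hdc j i
  rw [S3, if_pos (Finset.mem_univ i), hB]
  by_cases h : i = j
  · simp only [if_pos h]
    subst h
    linear_combination hdi i - hdc i i
  · simp only [if_neg h]
    linear_combination -(hdc i j)

end aux

/-- Quadratic-form expansion for a symmetric matrix with `B² = 2B`. -/
lemma quad_expand {N : ℕ} (B : Matrix (Fin N) (Fin N) ℝ) (hBt : Bᵀ = B)
    (hB2 : B * B = (2:ℝ) • B) (γ : ℝ) (z : Fin N → ℝ) :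
    ∑ i, (((1 : Matrix (Fin N) (Fin N) ℝ) - γ • B).mulVec z i) ^ 2
      = ∑ i, z i ^ 2 - (2 * γ - 2 * γ ^ 2) * (z ⬝ᵥ B.mulVec z) := by
  have h1 : ∀ (w : Fin N → ℝ), ∑ i, w i ^ 2 = w ⬝ᵥ w := by
    intro w; simp [dotProduct, sq]
  rw [h1, h1]
  set A := (1 : Matrix (Fin N) (Fin N) ℝ) - γ • B with hA
  have hAt : Aᵀ = A := by
    rw [hA, transpose_sub, transpose_smul, hBt, transpose_one]
  have key : A.mulVec z ⬝ᵥ A.mulVec z = z ⬝ᵥ (A * A).mulVec z := by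
    rw [Matrix.dotProduct_mulVec, ← Matrix.mulVec_transpose, hAt, mulVec_mulVec,
      dotProduct_comm]
  rw [key]
  have hAA : A * A = (1 : Matrix (Fin N) (Fin N) ℝ) - (2 * γ - 2 * γ ^ 2) • B := by
    have h2 : A * A = 1 - γ • B - γ • B + (γ * γ) • (B * B) := by
      rw [hA, sub_mul, one_mul, mul_sub, mul_one, smul_mul_assoc, mul_smul_comm, smul_smul]
      module
    rw [h2, hB2, smul_smul]
    module
  rw [hAA, sub_mulVec, one_mulVec, dotProduct_sub, smul_mulVec, dotProduct_smul,
    smul_eq_mul]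

section integ
variable {N M : ℕ} (G : SimpleGraph (Fin N)) [DecidableRel G.Adj]
  {Ω : Type*} [MeasurableSpace Ω] (μ : Measure Ω) [IsProbabilityMeasure μ]
  (c : Ω → Sym2 (Fin N) → Fin M)
  (hc_meas : ∀ e : Sym2 (Fin N), Measurable fun ω => c ω e)
  (hc_unif : ∀ e ∈ G.edgeSet, ∀ k : Fin M, μ {ω | c ω e = k} = 1 / (M : ENNReal))

include hc_meas in
lemma ind_integrable (e : Sym2 (Fin N)) (k : Fin M) :
    Integrable (fun ω => if c ω e = k then (1:ℝ) else 0) μ := by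
  have hs : MeasurableSet {ω | c ω e = k} := (hc_meas e) (measurableSet_singleton k)
  have hfun : (fun ω => if c ω e = k then (1:ℝ) else 0)
      = Set.indicator {ω | c ω e = k} (fun _ => (1:ℝ)) := by
    ext ω; simp [Set.indicator_apply, Set.mem_setOf_eq]
  rw [hfun]
  exact (integrable_const (1:ℝ)).indicator hs

include hc_meas hc_unif in
lemma ind_integral (e : Sym2 (Fin N)) (he : e ∈ G.edgeSet) (k : Fin M) :
    ∫ ω, (if c ω e = k then (1:ℝ) else 0) ∂μ = 1 / (M : ℝ) := by
  have hs : MeasurableSet {ω | c ω e = k} := (hc_meas e) (measurableSet_singleton k)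
  have hfun : (fun ω => if c ω e = k then (1:ℝ) else 0)
      = Set.indicator {ω | c ω e = k} (fun _ => (1:ℝ)) := by
    ext ω; simp [Set.indicator_apply, Set.mem_setOf_eq]
  rw [hfun, integral_indicator_const _ hs, measureReal_def, hc_unif e he k, smul_eq_mul, mul_one,
    ENNReal.toReal_div, ENNReal.toReal_one]
  simp

include hc_meas in
lemma entry_integrable (k : Fin M) (i j : Fin N) :
    Integrable (fun ω => chLap G (c ω) k i j) μ := by
  by_cases h : i = j
  · subst h
    have : (fun ω => chLap G (c ω) k i i)
        = fun ω => ∑ v ∈ G.neighborFinset i, (if c ω s(i, v) = k then (1:ℝ) else 0) := by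
      ext ω; simp [chLap]
    rw [this]
    exact integrable_finset_sum _ (fun v _ => ind_integrable μ c hc_meas _ k)
  · by_cases hadj : G.Adj i j
    · have : (fun ω => chLap G (c ω) k i j)
          = fun ω => -(if c ω s(i, j) = k then (1:ℝ) else 0) := by
        ext ω
        simp only [chLap, Matrix.of_apply, if_neg h]
        by_cases hc : c ω s(i, j) = k <;> simp [hadj, hc]
      rw [this]
      exact (ind_integrable μ c hc_meas _ k).neg
    · have : (fun ω => chLap G (c ω) k i j) = fun _ => (0:ℝ) := by
        ext ω
        simp only [chLap, Matrix.of_apply, if_neg h]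
        simp [hadj]
      rw [this]
      exact integrable_const 0

include hc_meas hc_unif in
lemma entry_integral (k : Fin M) (i j : Fin N) :
    ∫ ω, chLap G (c ω) k i j ∂μ = (1 / (M : ℝ)) * lapMat G i j := by
  by_cases h : i = j
  · subst h
    have h1 : (fun ω => chLap G (c ω) k i i)
        = fun ω => ∑ v ∈ G.neighborFinset i, (if c ω s(i, v) = k then (1:ℝ) else 0) := by
      ext ω; simp [chLap]
    rw [h1, integral_finset_sum _ (fun v _ => ind_integrable μ c hc_meas _ k)]
    have h2 : ∀ v ∈ G.neighborFinset i,
        ∫ ω, (if c ω s(i, v) = k then (1:ℝ) else 0) ∂μ = 1 / (M : ℝ) := by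
      intro v hv
      exact ind_integral G μ c hc_meas hc_unif _
        (by rw [SimpleGraph.mem_edgeSet]; exact (G.mem_neighborFinset i v).mp hv) k
    rw [Finset.sum_congr rfl h2, Finset.sum_const, SimpleGraph.card_neighborFinset_eq_degree]
    simp [lapMat, mul_comm]
  · by_cases hadj : G.Adj i j
    · have h1 : (fun ω => chLap G (c ω) k i j)
          = fun ω => -(if c ω s(i, j) = k then (1:ℝ) else 0) := by
        ext ω
        simp only [chLap, Matrix.of_apply, if_neg h]
        by_cases hc : c ω s(i, j) = k <;> simp [hadj, hc]
      rw [h1, integral_neg,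
        ind_integral G μ c hc_meas hc_unif _ ((G.mem_edgeSet).mpr hadj) k]
      simp [lapMat, if_neg h, hadj]
    · have h1 : (fun ω => chLap G (c ω) k i j) = fun _ => (0:ℝ) := by
        ext ω
        simp only [chLap, Matrix.of_apply, if_neg h]
        simp [hadj]
      rw [h1, integral_zero]
      simp [lapMat, if_neg h, hadj]
end integ

/-- Let `G` be a connected finite simple graph on `{1, …, N}` with
Laplacian `L`, let `M ≥ 1`, `γ ∈ (0,1)`, and let `c` be a random proper edge coloring with
uniform marginals `ℙ(c(e) = k) = 1/M`; let `L^k` be the channel Laplacians.  Let `λ₂` be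
the second smallest eigenvalue of `L`, i.e. the minimum of `zᵀ L z` over unit vectors `z`
orthogonal to `𝟏`.  Then for every color `k` and every `z` with `𝟏ᵀ z = 0`,
`E[‖(I − γ L^k) z‖²] = zᵀ (I − (2/M)(γ − γ²) L) z ≤ (1 − (2/M)(γ − γ²) λ₂) ‖z‖²`. -/
theorem expected_contraction
    {N : ℕ} (G : SimpleGraph (Fin N)) [DecidableRel G.Adj] (hG : G.Connected)
    (M : ℕ) (hM : 0 < M) (γ : ℝ) (hγ : γ ∈ Set.Ioo (0 : ℝ) 1)
    {Ω : Type*} [MeasurableSpace Ω] (μ : Measure Ω) [IsProbabilityMeasure μ]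
    (c : Ω → Sym2 (Fin N) → Fin M)
    (hc_meas : ∀ e : Sym2 (Fin N), Measurable fun ω => c ω e)
    (hc_proper : ∀ᵐ ω ∂μ, ∀ e ∈ G.edgeSet, ∀ e' ∈ G.edgeSet, e ≠ e' →
      (∃ v : Fin N, v ∈ e ∧ v ∈ e') → c ω e ≠ c ω e')
    (hc_unif : ∀ e ∈ G.edgeSet, ∀ k : Fin M,
      μ {ω | c ω e = k} = 1 / (M : ENNReal))
    (lam2 : ℝ)
    (hlam2 : IsLeast {x : ℝ | ∃ z : Fin N → ℝ,
        (∑ i, z i) = 0 ∧ (∑ i, z i ^ 2) = 1 ∧ x = z ⬝ᵥ (lapMat G).mulVec z} lam2) :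
    ∀ (k : Fin M) (z : Fin N → ℝ), (∑ i, z i) = 0 →
      (∫ ω, ∑ i, (((1 : Matrix (Fin N) (Fin N) ℝ) - γ • chLap G (c ω) k).mulVec z i) ^ 2 ∂μ)
        = z ⬝ᵥ ((1 : Matrix (Fin N) (Fin N) ℝ)
            - ((2 / (M : ℝ)) * (γ - γ ^ 2)) • lapMat G).mulVec z ∧
      z ⬝ᵥ ((1 : Matrix (Fin N) (Fin N) ℝ)
            - ((2 / (M : ℝ)) * (γ - γ ^ 2)) • lapMat G).mulVec z
        ≤ (1 - (2 / (M : ℝ)) * (γ - γ ^ 2) * lam2) * (∑ i, z i ^ 2) := by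
  intro k z hz
  -- generic expansion of the quadratic form `zᵀ (I - c₀ A) z`
  have hform : ∀ (A : Matrix (Fin N) (Fin N) ℝ) (c0 : ℝ),
      z ⬝ᵥ ((1 : Matrix (Fin N) (Fin N) ℝ) - c0 • A).mulVec z
        = ∑ i, z i ^ 2 - c0 * (z ⬝ᵥ A.mulVec z) := by
    intro A c0
    rw [sub_mulVec, one_mulVec, dotProduct_sub, smul_mulVec, dotProduct_smul,
      smul_eq_mul]
    congr 1
    simp [dotProduct, sq]
  -- a.e. pointwise identity
  have hae : (fun ω => ∑ i, (((1 : Matrix (Fin N) (Fin N) ℝ)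
        - γ • chLap G (c ω) k).mulVec z i) ^ 2)
      =ᵐ[μ] (fun ω => ∑ i, z i ^ 2
        - (2 * γ - 2 * γ ^ 2) * (z ⬝ᵥ (chLap G (c ω) k).mulVec z)) := by
    filter_upwards [hc_proper] with ω hω
    have hm : IsMatch G (c ω) k := by
      intro i u v hiu hiv hcu hcv
      by_contra huv
      have hne : s(i,u) ≠ s(i,v) := by
        intro hEq
        rcases Sym2.eq_iff.mp hEq with ⟨-, h2⟩ | ⟨h1, h2⟩
        · exact huv h2
        · exact huv (h2.trans h1)
      exact (hω s(i,u) ((G.mem_edgeSet).mpr hiu) s(i,v) ((G.mem_edgeSet).mpr hiv) hne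
        ⟨i, by simp, by simp⟩) (hcu.trans hcv.symm)
    exact quad_expand _ (chLap_transpose G (c ω) k) (chLap_sq_s11 G (c ω) k hm) γ z
  -- rewriting the quadratic form as a double sum
  have hQ : ∀ (v : Fin N → ℝ) (A : Matrix (Fin N) (Fin N) ℝ),
      v ⬝ᵥ A.mulVec v = ∑ i, ∑ j, v i * (A i j * v j) := by
    intro v A
    simp [dotProduct, mulVec, Finset.mul_sum]
  -- integrability of the cross term
  have hQint : Integrable (fun ω => z ⬝ᵥ (chLap G (c ω) k).mulVec z) μ := by
    have : (fun ω => z ⬝ᵥ (chLap G (c ω) k).mulVec z)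
        = fun ω => ∑ i, ∑ j, z i * (chLap G (c ω) k i j * z j) := funext fun ω => hQ z _
    rw [this]
    exact integrable_finset_sum _ (fun i _ => integrable_finset_sum _ (fun j _ =>
      (((entry_integrable G μ c hc_meas k i j).mul_const (z j)).const_mul (z i))))
  -- value of the integral of the cross term
  have hQval : ∫ ω, z ⬝ᵥ (chLap G (c ω) k).mulVec z ∂μ
      = (1 / (M : ℝ)) * (z ⬝ᵥ (lapMat G).mulVec z) := by
    have h1 : (fun ω => z ⬝ᵥ (chLap G (c ω) k).mulVec z)
        = fun ω => ∑ i, ∑ j, z i * (chLap G (c ω) k i j * z j) := funext fun ω => hQ z _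
    rw [h1, integral_finset_sum _ (fun i _ => integrable_finset_sum _ (fun j _ =>
      (((entry_integrable G μ c hc_meas k i j).mul_const (z j)).const_mul (z i))))]
    have h2 : ∀ i, ∫ ω, ∑ j, z i * (chLap G (c ω) k i j * z j) ∂μ
        = ∑ j, (1 / (M : ℝ)) * (z i * (lapMat G i j * z j)) := by
      intro i
      rw [integral_finset_sum _ (fun j _ =>
        (((entry_integrable G μ c hc_meas k i j).mul_const (z j)).const_mul (z i)))]
      apply Finset.sum_congr rfl
      intro j _
      rw [integral_const_mul, integral_mul_const, entry_integral G μ c hc_meas hc_unif k i j]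
      ring
    rw [Finset.sum_congr rfl (fun i _ => h2 i), hQ z (lapMat G), Finset.mul_sum]
    exact Finset.sum_congr rfl (fun i _ => (Finset.mul_sum _ _ _).symm)
  have hc0 : (2 / (M : ℝ)) * (γ - γ ^ 2) = (2 * γ - 2 * γ ^ 2) * (1 / (M : ℝ)) := by
    ring
  constructor
  · -- the expectation identity
    rw [integral_congr_ae hae]
    rw [integral_sub (integrable_const _) (hQint.const_mul _)]
    rw [integral_const, integral_const_mul, hQval]
    rw [hform (lapMat G) ((2 / (M : ℝ)) * (γ - γ ^ 2))]
    simp only [measureReal_def, measure_univ, ENNReal.toReal_one, one_smul]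
    ring
  · -- the eigenvalue bound
    have hLlower : lam2 * (∑ i, z i ^ 2) ≤ z ⬝ᵥ (lapMat G).mulVec z := by
      by_cases hs : (∑ i, z i ^ 2) = 0
      · have hz0 : z = 0 := by
          funext i
          have h0 := (Finset.sum_eq_zero_iff_of_nonneg
            (fun i _ => sq_nonneg (z i))).mp hs i (Finset.mem_univ i)
          exact (pow_eq_zero_iff two_ne_zero).mp h0
        rw [hs, hz0]
        simp
      · have hpos : 0 < ∑ i, z i ^ 2 :=
          lt_of_le_of_ne (Finset.sum_nonneg (fun i _ => sq_nonneg (z i))) (Ne.symm hs)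
        set s := Real.sqrt (∑ i, z i ^ 2) with hsdef
        have hspos : 0 < s := Real.sqrt_pos.mpr hpos
        have hs2 : s * s = ∑ i, z i ^ 2 := Real.mul_self_sqrt hpos.le
        set w : Fin N → ℝ := fun i => s⁻¹ * z i with hwdef
        have hw1 : (∑ i, w i) = 0 := by
          simp only [hwdef, ← Finset.mul_sum, hz, mul_zero]
        have hw2 : (∑ i, w i ^ 2) = 1 := by
          have : ∀ i, w i ^ 2 = s⁻¹ * s⁻¹ * z i ^ 2 := by intro i; simp [hwdef]; ring
          rw [Finset.sum_congr rfl (fun i _ => this i), ← Finset.mul_sum, ← hs2]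
          field_simp
        have hwQ : w ⬝ᵥ (lapMat G).mulVec w
            = (s⁻¹ * s⁻¹) * (z ⬝ᵥ (lapMat G).mulVec z) := by
          rw [hQ w, hQ z, Finset.mul_sum]
          apply Finset.sum_congr rfl
          intro i _
          rw [Finset.mul_sum]
          apply Finset.sum_congr rfl
          intro j _
          simp only [hwdef]
          ring
        have hmem : w ⬝ᵥ (lapMat G).mulVec w ∈ {x : ℝ | ∃ z : Fin N → ℝ,
            (∑ i, z i) = 0 ∧ (∑ i, z i ^ 2) = 1 ∧ x = z ⬝ᵥ (lapMat G).mulVec z} :=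
          ⟨w, hw1, hw2, rfl⟩
        have hle : lam2 ≤ (s⁻¹ * s⁻¹) * (z ⬝ᵥ (lapMat G).mulVec z) := by
          rw [← hwQ]; exact hlam2.2 hmem
        have hinv : (s⁻¹ * s⁻¹) * (∑ i, z i ^ 2) = 1 := by
          rw [← hs2]; field_simp
        have h3 : lam2 * (∑ i, z i ^ 2)
            ≤ ((s⁻¹ * s⁻¹) * (z ⬝ᵥ (lapMat G).mulVec z)) * (∑ i, z i ^ 2) :=
          mul_le_mul_of_nonneg_right hle hpos.le
        have h4 : ((s⁻¹ * s⁻¹) * (z ⬝ᵥ (lapMat G).mulVec z)) * (∑ i, z i ^ 2)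
            = z ⬝ᵥ (lapMat G).mulVec z := by
          linear_combination (z ⬝ᵥ (lapMat G).mulVec z) * hinv
        linarith [h3, h4]
    have hcpos : 0 < (2 / (M : ℝ)) * (γ - γ ^ 2) := by
      have hMpos : (0:ℝ) < M := by exact_mod_cast hM
      have : 0 < γ - γ ^ 2 := by nlinarith [hγ.1, hγ.2]
      positivity
    rw [hform (lapMat G) ((2 / (M : ℝ)) * (γ - γ ^ 2))]
    nlinarith [hLlower, hcpos]
end

section
/- Let G be a connected finite simple graph on the vertex set {1, …, N} with edge set E, maximum degree d_max and Laplacian L; let M ≥ 2·d_max − 1 be an integer, γ ∈ (0, 1), s_1, …, s_M distinct nonzero reals, and p₀ an integer with 0 ≤ p₀ ≤ M − 1. Let (c_t)_{t∈ℕ} be a sequence of mutually independent random variables, each taking values in the maps E → {1, …, M}, such that for every t: almost surely any two distinct adjacent edges receive different colors under c_t, and ℙ(c_t(e) = k) = 1/M for every edge e and every k. For each t and k let L^k(t) be the Laplacian of the subgraph of edges e with c_t(e) = k. Let each agent i carry r_i(t) = (r_i^1(t), …, r_i^M(t)) ∈ ℝ^M with r_i(0) in the column span of the Vandermonde matrix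 Φ_{p₀}, updated by r̃_i^k(t+1) = r_i^k(t) + γ · Σ_{j : {i,j}∈E} 1(c_t({i,j}) = k)(r_j^k(t) − r_i^k(t)) followed by r_i(t+1) = T̄_{p₀} r̃_i(t+1). Then, almost surely, for every agent i ∈ {1, …, N} and every channel k ∈ {1, …, M}, lim_{t→∞} r_i^k(t) = (1/N) Σ_{j=1}^N r_j^k(0). -/
open Matrix MeasureTheory ProbabilityTheory Filter

def vandMat (M p : ℕ) (s : Fin M → ℝ) : Matrix (Fin M) (Fin (p + 1)) ℝ :=
  Matrix.of fun k ℓ => s k ^ (ℓ : ℕ)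

noncomputable def projMat (M p : ℕ) (s : Fin M → ℝ) : Matrix (Fin M) (Fin M) ℝ :=
  vandMat M p s * ((vandMat M p s).transpose * vandMat M p s)⁻¹ * (vandMat M p s).transpose

section Proj

variable {M p : ℕ} {s : Fin M → ℝ}

lemma vand_mulVec_eq_zero (hs : Function.Injective s) (hp : p + 1 ≤ M)
    (a : Fin (p+1) → ℝ) (ha : vandMat M p s *ᵥ a = 0) : a = 0 := by
  set W : Matrix (Fin (p+1)) (Fin (p+1)) ℝ :=
    Matrix.vandermonde (fun k => s (Fin.castLE hp k)) with hW
  have hdet : W.det ≠ 0 := by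
    rw [hW, Matrix.det_vandermonde]
    refine Finset.prod_ne_zero_iff.mpr fun i _ => Finset.prod_ne_zero_iff.mpr fun j hj => ?_
    refine sub_ne_zero_of_ne fun hc => ?_
    have hji : (j : Fin (p+1)) = i := Fin.castLE_injective hp (hs hc)
    rw [Finset.mem_Ioi] at hj
    exact lt_irrefl i (hji ▸ hj)
  have hWa : W *ᵥ a = 0 := by
    funext k
    have := congrFun ha (Fin.castLE hp k)
    simpa [Matrix.mulVec, dotProduct, vandMat, Matrix.vandermonde, hW] using this
  have hinj : Function.Injective (W.mulVec) :=
    Matrix.mulVec_injective_iff_isUnit.mpr ((Matrix.isUnit_iff_isUnit_det W).mpr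
      (isUnit_iff_ne_zero.mpr hdet))
  exact hinj (by simpa [Matrix.mulVec_zero] using hWa)

lemma gram_isUnit (hs : Function.Injective s) (hp : p + 1 ≤ M) :
    IsUnit ((vandMat M p s).transpose * vandMat M p s).det := by
  set Φ := vandMat M p s with hΦ
  rw [← Matrix.isUnit_iff_isUnit_det]
  rw [← Matrix.mulVec_injective_iff_isUnit]
  intro a b hab
  have key : ∀ v : Fin (p+1) → ℝ, (Φᵀ * Φ) *ᵥ v = 0 → v = 0 := by
    intro v hv
    have h1 : (Φ *ᵥ v) ⬝ᵥ (Φ *ᵥ v) = 0 := by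
      have : v ⬝ᵥ ((Φᵀ * Φ) *ᵥ v) = 0 := by rw [hv, dotProduct_zero]
      rw [← Matrix.mulVec_mulVec] at this
      rwa [dotProduct_mulVec, Matrix.vecMul_transpose] at this
    have h2 : Φ *ᵥ v = 0 := by
      funext k
      have hnn : ∀ k' ∈ Finset.univ, (0:ℝ) ≤ (Φ *ᵥ v) k' * (Φ *ᵥ v) k' :=
        fun k' _ => mul_self_nonneg _
      have := (Finset.sum_eq_zero_iff_of_nonneg hnn).mp h1 k (Finset.mem_univ k)
      exact mul_self_eq_zero.mp this
    exact vand_mulVec_eq_zero hs hp v h2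
  have : (Φᵀ * Φ) *ᵥ (a - b) = 0 := by
    rw [Matrix.mulVec_sub, hab, sub_self]
  exact sub_eq_zero.mp (key _ this)

lemma projMat_mul_vand (hs : Function.Injective s) (hp : p + 1 ≤ M) :
    projMat M p s * vandMat M p s = vandMat M p s := by
  set Φ := vandMat M p s with hΦ
  have hG := gram_isUnit hs hp
  show Φ * (Φᵀ * Φ)⁻¹ * Φᵀ * Φ = Φ
  rw [Matrix.mul_assoc (Φ * (Φᵀ * Φ)⁻¹), Matrix.mul_assoc Φ, Matrix.nonsing_inv_mul _ hG,
    Matrix.mul_one]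

lemma projMat_fix_span (hs : Function.Injective s) (hp : p + 1 ≤ M)
    (x : Fin M → ℝ)
    (hx : x ∈ Submodule.span ℝ
      (Set.range fun ℓ : Fin (p + 1) => fun k : Fin M => vandMat M p s k ℓ)) :
    projMat M p s *ᵥ x = x := by
  rw [Submodule.mem_span_range_iff_exists_fun] at hx
  obtain ⟨a, ha⟩ := hx
  have hxa : x = vandMat M p s *ᵥ a := by
    rw [← ha]; funext k
    simp [Matrix.mulVec, dotProduct, Finset.sum_apply, mul_comm]
  rw [hxa, Matrix.mulVec_mulVec, projMat_mul_vand hs hp]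

lemma projMat_transpose (hs : Function.Injective s) (hp : p + 1 ≤ M) :
    (projMat M p s)ᵀ = projMat M p s := by
  set Φ := vandMat M p s with hΦ
  show (Φ * (Φᵀ * Φ)⁻¹ * Φᵀ)ᵀ = Φ * (Φᵀ * Φ)⁻¹ * Φᵀ
  rw [Matrix.transpose_mul, Matrix.transpose_mul, Matrix.transpose_transpose,
    Matrix.transpose_nonsing_inv, Matrix.transpose_mul, Matrix.transpose_transpose,
    Matrix.mul_assoc]

lemma projMat_idem (hs : Function.Injective s) (hp : p + 1 ≤ M) :
    projMat M p s * projMat M p s = projMat M p s := by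
  set Φ := vandMat M p s with hΦ
  have hG := gram_isUnit hs hp
  show (Φ * (Φᵀ * Φ)⁻¹ * Φᵀ) * (Φ * (Φᵀ * Φ)⁻¹ * Φᵀ) = Φ * (Φᵀ * Φ)⁻¹ * Φᵀ
  calc (Φ * (Φᵀ * Φ)⁻¹ * Φᵀ) * (Φ * (Φᵀ * Φ)⁻¹ * Φᵀ)
      = Φ * (Φᵀ * Φ)⁻¹ * ((Φᵀ * Φ) * ((Φᵀ * Φ)⁻¹ * Φᵀ)) := by
        simp only [Matrix.mul_assoc]
    _ = Φ * (Φᵀ * Φ)⁻¹ * Φᵀ := by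
        rw [← Matrix.mul_assoc (Φᵀ * Φ), Matrix.mul_nonsing_inv _ hG, Matrix.one_mul]

lemma projMat_nonexp (hs : Function.Injective s) (hp : p + 1 ≤ M) (v : Fin M → ℝ) :
    ∑ k, (projMat M p s *ᵥ v) k ^ 2 ≤ ∑ k, v k ^ 2 := by
  set T := projMat M p s with hT
  set w := T *ᵥ v with hw
  have h1 : ∑ k, w k ^ 2 = ∑ k, v k * w k := by
    have : w ⬝ᵥ w = v ⬝ᵥ w := by
      calc w ⬝ᵥ w = (T *ᵥ v) ⬝ᵥ (T *ᵥ v) := rfl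
        _ = (v ᵥ* Tᵀ) ⬝ᵥ (T *ᵥ v) := by rw [Matrix.vecMul_transpose]
        _ = v ⬝ᵥ (Tᵀ *ᵥ (T *ᵥ v)) := by rw [← dotProduct_mulVec]
        _ = v ⬝ᵥ (T *ᵥ v) := by
            rw [Matrix.mulVec_mulVec, projMat_transpose hs hp, projMat_idem hs hp]
    simpa [dotProduct, pow_two] using this
  have h2 : (∑ k, v k * w k) ^ 2 ≤ (∑ k, v k ^ 2) * (∑ k, w k ^ 2) :=
    Finset.sum_mul_sq_le_sq_mul_sq _ _ _
  rcases eq_or_lt_of_le (Finset.sum_nonneg fun k _ => sq_nonneg (w k)) with h0 | h0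
  · rw [← h0]; exact Finset.sum_nonneg fun k _ => sq_nonneg (v k)
  · nlinarith [h1, h2, h0]

end Proj

section Gap

variable {N : ℕ}

lemma walk_eq_of_adj_eq {G : SimpleGraph (Fin N)} (y : Fin N → ℝ)
    (h : ∀ i j, G.Adj i j → y i = y j) {a b : Fin N} (w : G.Walk a b) : y a = y b := by
  induction w with
  | nil => rfl
  | cons hadj _ ih => exact (h _ _ hadj).trans ih

lemma exists_spectral_gap (G : SimpleGraph (Fin N)) [DecidableRel G.Adj]
    (hG : G.Connected) :
    ∃ lam : ℝ, 0 < lam ∧ ∀ y : Fin N → ℝ, (∑ i, y i = 0) →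
      lam * ∑ i, y i ^ 2 ≤ ∑ i, ∑ j ∈ G.neighborFinset i, (y i - y j) ^ 2 := by
  classical
  have hN : 0 < N := by
    have := hG.nonempty
    simpa [Fin.pos_iff_nonempty] using this
  set Q : (Fin N → ℝ) → ℝ := fun y => ∑ i, ∑ j ∈ G.neighborFinset i, (y i - y j) ^ 2 with hQ
  have hQcont : Continuous Q := by
    apply continuous_finset_sum; intro i _
    apply continuous_finset_sum; intro j _
    exact ((continuous_apply i).sub (continuous_apply j)).pow 2
  have hQnonneg : ∀ y, 0 ≤ Q y := fun y =>
    Finset.sum_nonneg fun i _ => Finset.sum_nonneg fun j _ => sq_nonneg _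
  have hQzero : ∀ y : Fin N → ℝ, (∑ i, y i = 0) → Q y = 0 → y = 0 := by
    intro y hsum hQy
    have hadj : ∀ i j, G.Adj i j → y i = y j := by
      intro i j hij
      have h1 : ∀ i ∈ Finset.univ, (0:ℝ) ≤ ∑ j ∈ G.neighborFinset i, (y i - y j) ^ 2 :=
        fun i _ => Finset.sum_nonneg fun j _ => sq_nonneg _
      have h2 := (Finset.sum_eq_zero_iff_of_nonneg h1).mp hQy i (Finset.mem_univ i)
      have h3 := (Finset.sum_eq_zero_iff_of_nonneg
        (fun j _ => sq_nonneg (y i - y j))).mp h2 j (by rwa [SimpleGraph.mem_neighborFinset])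
      have := sq_eq_zero_iff.mp h3
      linarith
    have hconst : ∀ i j : Fin N, y i = y j := by
      intro i j
      obtain ⟨w⟩ := hG.preconnected i j
      exact walk_eq_of_adj_eq y hadj w
    funext i
    have : ∑ j, y j = (N : ℝ) * y i := by
      rw [Finset.sum_congr rfl fun j _ => hconst j i]
      simp [Finset.card_univ, mul_comm]
    rw [hsum] at this
    have hN' : (N:ℝ) ≠ 0 := Nat.cast_ne_zero.mpr hN.ne'
    have := (mul_eq_zero.mp this.symm).resolve_left hN'
    simpa using this
  set K : Set (Fin N → ℝ) := {y | (∑ i, y i = 0) ∧ ∑ i, y i ^ 2 = 1} with hK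
  have hKclosed : IsClosed K := by
    apply IsClosed.inter
    · exact isClosed_eq (continuous_finset_sum _ fun i _ => continuous_apply i) continuous_const
    · exact isClosed_eq (continuous_finset_sum _ fun i _ => (continuous_apply i).pow 2)
        continuous_const
  have hKcpt : IsCompact K := by
    have hsub : K ⊆ Metric.closedBall 0 1 := by
      intro y hy
      rw [Metric.mem_closedBall, dist_zero_right]
      rw [pi_norm_le_iff_of_nonneg zero_le_one]
      intro i
      have h1 : y i ^ 2 ≤ 1 := by
        rw [← hy.2]
        exact Finset.single_le_sum (fun j (_ : j ∈ Finset.univ) => sq_nonneg (y j))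
          (Finset.mem_univ i)
      rw [Real.norm_eq_abs, ← Real.sqrt_one, ← Real.sqrt_sq_eq_abs]
      exact Real.sqrt_le_sqrt h1
    exact (isCompact_closedBall 0 1).of_isClosed_subset hKclosed hsub
  -- main claim
  by_cases hKne : K.Nonempty
  · obtain ⟨y₀, hy₀K, hy₀min⟩ := hKcpt.exists_isMinOn hKne hQcont.continuousOn
    refine ⟨Q y₀, ?_, ?_⟩
    · rcases (hQnonneg y₀).lt_or_eq with h | h
      · exact h
      · exfalso
        have := hQzero y₀ hy₀K.1 h.symm
        rw [this] at hy₀K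
        simpa using hy₀K.2
    · intro y hysum
      by_cases hy0 : ∑ i, y i ^ 2 = 0
      · have : ∀ i, y i = 0 := by
          intro i
          have := (Finset.sum_eq_zero_iff_of_nonneg
            (fun j (_ : j ∈ Finset.univ) => sq_nonneg (y j))).mp hy0 i (Finset.mem_univ i)
          exact sq_eq_zero_iff.mp this
        have hQy : Q y = 0 := by
          rw [hQ]; apply Finset.sum_eq_zero; intro i _
          apply Finset.sum_eq_zero; intro j _; rw [this i, this j]; ring
        show Q y₀ * ∑ i, y i ^ 2 ≤ Q y
        rw [hy0, hQy, mul_zero]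
      · have hpos : 0 < ∑ i, y i ^ 2 :=
          (Finset.sum_nonneg fun i _ => sq_nonneg (y i)).lt_of_ne (Ne.symm hy0)
        set t : ℝ := Real.sqrt (∑ i, y i ^ 2) with ht
        have htpos : 0 < t := Real.sqrt_pos.mpr hpos
        have ht2 : t ^ 2 = ∑ i, y i ^ 2 := Real.sq_sqrt hpos.le
        set z : Fin N → ℝ := fun i => t⁻¹ * y i with hz
        have hzK : z ∈ K := by
          constructor
          · simp only [hz, ← Finset.mul_sum, hysum, mul_zero]
          · simp only [hz, mul_pow, ← Finset.mul_sum, ← ht2]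
            field_simp
        have hQz : Q z = t⁻¹ ^ 2 * Q y := by
          simp only [hQ, hz, Finset.mul_sum]
          refine Finset.sum_congr rfl fun i _ => Finset.sum_congr rfl fun j _ => ?_
          ring
        have hmin : Q y₀ ≤ Q z := hy₀min hzK
        rw [hQz] at hmin
        have : Q y₀ * t ^ 2 ≤ Q y := by
          have h2 := mul_le_mul_of_nonneg_right hmin (sq_nonneg t)
          have : t⁻¹ ^ 2 * Q y * t ^ 2 = Q y := by
            field_simp
          linarith [h2, this]
        show Q y₀ * ∑ i, y i ^ 2 ≤ Q y
        rw [← ht2]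
        linarith
  · -- K empty: every mean-zero vector is zero
    refine ⟨1, one_pos, fun y hysum => ?_⟩
    by_cases hy0 : ∑ i, y i ^ 2 = 0
    · rw [hy0, mul_zero]
      exact hQnonneg y
    · exfalso
      apply hKne
      have hpos : 0 < ∑ i, y i ^ 2 :=
        (Finset.sum_nonneg fun i _ => sq_nonneg (y i)).lt_of_ne (Ne.symm hy0)
      set t : ℝ := Real.sqrt (∑ i, y i ^ 2) with ht
      have htpos : 0 < t := Real.sqrt_pos.mpr hpos
      have ht2 : t ^ 2 = ∑ i, y i ^ 2 := Real.sq_sqrt hpos.le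
      refine ⟨fun i => t⁻¹ * y i, ?_, ?_⟩
      · simp only [← Finset.mul_sum, hysum, mul_zero]
      · simp only [mul_pow, ← Finset.mul_sum, ← ht2]
        field_simp

end Gap

section Step

variable {N : ℕ}

lemma sum_neighbor_swap (G : SimpleGraph (Fin N)) [DecidableRel G.Adj]
    (F : Fin N → Fin N → ℝ) :
    ∑ i, ∑ j ∈ G.neighborFinset i, F i j = ∑ i, ∑ j ∈ G.neighborFinset i, F j i := by
  have h : ∀ (H : Fin N → Fin N → ℝ), ∑ i, ∑ j ∈ G.neighborFinset i, H i j
      = ∑ i, ∑ j, if G.Adj i j then H i j else 0 := by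
    intro H
    refine Finset.sum_congr rfl fun i _ => ?_
    rw [SimpleGraph.neighborFinset_eq_filter, Finset.sum_filter]
  rw [h, h, Finset.sum_comm]
  refine Finset.sum_congr rfl fun i _ => Finset.sum_congr rfl fun j _ => ?_
  by_cases hij : G.Adj i j
  · rw [if_pos hij, if_pos (G.adj_symm hij)]
  · rw [if_neg hij, if_neg (fun h' => hij (G.adj_symm h'))]

lemma sum_antisymm_zero (G : SimpleGraph (Fin N)) [DecidableRel G.Adj]
    (F : Fin N → Fin N → ℝ) (hF : ∀ i j, G.Adj i j → F i j = -F j i) :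
    ∑ i, ∑ j ∈ G.neighborFinset i, F i j = 0 := by
  have h1 := sum_neighbor_swap G F
  have h2 : ∑ i, ∑ j ∈ G.neighborFinset i, F j i
      = -∑ i, ∑ j ∈ G.neighborFinset i, F i j := by
    rw [← Finset.sum_neg_distrib]
    refine Finset.sum_congr rfl fun i _ => ?_
    rw [← Finset.sum_neg_distrib]
    refine Finset.sum_congr rfl fun j hj => ?_
    rw [SimpleGraph.mem_neighborFinset] at hj
    rw [hF i j hj, neg_neg]
  linarith [h1, h2]

lemma step_k (G : SimpleGraph (Fin N)) [DecidableRel G.Adj]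
    {γ : ℝ} (hγ0 : 0 < γ) (hγ1 : γ < 1)
    (y : Fin N → ℝ) (ind : Fin N → Fin N → ℝ)
    (hsymm : ∀ i j, ind i j = ind j i) (h01 : ∀ i j, ind i j = 0 ∨ ind i j = 1)
    (hcard : ∀ i, ∑ j ∈ G.neighborFinset i, ind i j ≤ 1) :
    (∑ i, (y i + γ * ∑ j ∈ G.neighborFinset i, ind i j * (y j - y i)) ^ 2)
      + γ * (1 - γ) * ∑ i, ∑ j ∈ G.neighborFinset i, ind i j * (y i - y j) ^ 2
    ≤ ∑ i, y i ^ 2 := by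
  set u : Fin N → ℝ := fun i => ∑ j ∈ G.neighborFinset i, ind i j * (y j - y i) with hu
  set A : ℝ := ∑ i, ∑ j ∈ G.neighborFinset i, ind i j * (y i - y j) ^ 2 with hA
  have hind_nonneg : ∀ i j, 0 ≤ ind i j := by
    intro i j; rcases h01 i j with h | h <;> rw [h] <;> norm_num
  have hA_nonneg : 0 ≤ A :=
    Finset.sum_nonneg fun i _ => Finset.sum_nonneg fun j _ =>
      mul_nonneg (hind_nonneg i j) (sq_nonneg _)
  -- cross term
  have hcross : 2 * ∑ i, y i * u i = -A := by
    have hexp : ∀ i, y i * u i = ∑ j ∈ G.neighborFinset i, ind i j * (y i * y j - y i ^ 2) := by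
      intro i
      rw [hu, Finset.mul_sum]
      refine Finset.sum_congr rfl fun j _ => by ring
    have h1 : ∑ i, ∑ j ∈ G.neighborFinset i, ind i j * (y i * y j - y i ^ 2)
        = ∑ i, ∑ j ∈ G.neighborFinset i, ind j i * (y j * y i - y j ^ 2) :=
      sum_neighbor_swap G _
    have h2 : ∀ i j, ind i j * (y i * y j - y i ^ 2) + ind j i * (y j * y i - y j ^ 2)
        = -(ind i j * (y i - y j) ^ 2) := by
      intro i j
      rw [← hsymm i j]; ring
    have h3 : (∑ i, ∑ j ∈ G.neighborFinset i, ind i j * (y i * y j - y i ^ 2))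
        + ∑ i, ∑ j ∈ G.neighborFinset i, ind j i * (y j * y i - y j ^ 2) = -A := by
      rw [← Finset.sum_add_distrib, hA, ← Finset.sum_neg_distrib]
      refine Finset.sum_congr rfl fun i _ => ?_
      rw [← Finset.sum_add_distrib, ← Finset.sum_neg_distrib]
      exact Finset.sum_congr rfl fun j _ => h2 i j
    have h4 : ∑ i, y i * u i = ∑ i, ∑ j ∈ G.neighborFinset i, ind i j * (y i * y j - y i ^ 2) :=
      Finset.sum_congr rfl fun i _ => hexp i
    linarith [h1, h3, h4]
  -- quadratic term
  have hquad : ∑ i, u i ^ 2 ≤ A := by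
    rw [hA]
    refine Finset.sum_le_sum fun i _ => ?_
    have hCS : (∑ j ∈ G.neighborFinset i, ind i j * (y j - y i)) ^ 2
        ≤ (∑ j ∈ G.neighborFinset i, ind i j ^ 2)
          * ∑ j ∈ G.neighborFinset i, (y j - y i) ^ 2 * ind i j ^ 2 := by
      have := Finset.sum_mul_sq_le_sq_mul_sq (G.neighborFinset i)
        (fun j => ind i j) (fun j => (y j - y i) * ind i j)
      calc (∑ j ∈ G.neighborFinset i, ind i j * (y j - y i)) ^ 2
          = (∑ j ∈ G.neighborFinset i, ind i j * ((y j - y i) * ind i j)) ^ 2 := by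
            refine congrArg (· ^ 2) (Finset.sum_congr rfl fun j _ => ?_)
            rcases h01 i j with h | h <;> rw [h] <;> ring
        _ ≤ (∑ j ∈ G.neighborFinset i, ind i j ^ 2)
            * ∑ j ∈ G.neighborFinset i, ((y j - y i) * ind i j) ^ 2 := this
        _ = (∑ j ∈ G.neighborFinset i, ind i j ^ 2)
            * ∑ j ∈ G.neighborFinset i, (y j - y i) ^ 2 * ind i j ^ 2 := by
            refine congrArg _ (Finset.sum_congr rfl fun j _ => by ring)
    have hsq : ∀ i j, ind i j ^ 2 = ind i j := by
      intro i j; rcases h01 i j with h | h <;> rw [h] <;> ring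
    have h5 : (∑ j ∈ G.neighborFinset i, ind i j ^ 2) ≤ 1 := by
      calc ∑ j ∈ G.neighborFinset i, ind i j ^ 2
          = ∑ j ∈ G.neighborFinset i, ind i j :=
            Finset.sum_congr rfl fun j _ => hsq i j
        _ ≤ 1 := hcard i
    have h6 : 0 ≤ ∑ j ∈ G.neighborFinset i, (y j - y i) ^ 2 * ind i j ^ 2 :=
      Finset.sum_nonneg fun j _ => mul_nonneg (sq_nonneg _) (sq_nonneg _)
    calc u i ^ 2 ≤ (∑ j ∈ G.neighborFinset i, ind i j ^ 2)
          * ∑ j ∈ G.neighborFinset i, (y j - y i) ^ 2 * ind i j ^ 2 := hCS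
      _ ≤ 1 * ∑ j ∈ G.neighborFinset i, (y j - y i) ^ 2 * ind i j ^ 2 :=
          mul_le_mul_of_nonneg_right h5 h6
      _ = ∑ j ∈ G.neighborFinset i, ind i j * (y i - y j) ^ 2 := by
          rw [one_mul]
          refine Finset.sum_congr rfl fun j _ => ?_
          rw [hsq i j]; ring
  -- combine
  have hexp2 : ∑ i, (y i + γ * u i) ^ 2
      = ∑ i, y i ^ 2 + 2 * γ * ∑ i, y i * u i + γ ^ 2 * ∑ i, u i ^ 2 := by
    rw [Finset.mul_sum, Finset.mul_sum, ← Finset.sum_add_distrib, ← Finset.sum_add_distrib]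
    exact Finset.sum_congr rfl fun i _ => by ring
  have hγA : γ ^ 2 * ∑ i, u i ^ 2 ≤ γ ^ 2 * A :=
    mul_le_mul_of_nonneg_left hquad (sq_nonneg γ)
  have : ∑ i, (y i + γ * u i) ^ 2 ≤ ∑ i, y i ^ 2 - γ * A + γ ^ 2 * A := by
    rw [hexp2]
    nlinarith [hcross, hγA]
  nlinarith [this]


lemma step_ineq (G : SimpleGraph (Fin N)) [DecidableRel G.Adj] {M : ℕ}
    {γ : ℝ} (hγ0 : 0 < γ) (hγ1 : γ < 1)
    (T : Matrix (Fin M) (Fin M) ℝ)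
    (hT : ∀ v : Fin M → ℝ, ∑ k, (T *ᵥ v) k ^ 2 ≤ ∑ k, v k ^ 2)
    (abar : Fin M → ℝ) (habar : T *ᵥ abar = abar)
    (x x' : Fin N → Fin M → ℝ) (χ : Sym2 (Fin N) → Fin M)
    (hprop : ∀ i : Fin N, ∀ j ∈ G.neighborFinset i, ∀ j' ∈ G.neighborFinset i,
        j ≠ j' → χ s(i, j) ≠ χ s(i, j'))
    (hx' : ∀ i, x' i = T *ᵥ fun k => x i k + γ * ∑ j ∈ G.neighborFinset i,
        (if χ s(i, j) = k then (1:ℝ) else 0) * (x j k - x i k)) :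
    (∑ i, ∑ k, (x' i k - abar k) ^ 2)
      + γ * (1 - γ) * ∑ k, ∑ i, ∑ j ∈ G.neighborFinset i,
          (if χ s(i, j) = k then (1:ℝ) else 0) * (x i k - x j k) ^ 2
    ≤ ∑ i, ∑ k, (x i k - abar k) ^ 2 := by
  set w : Fin N → Fin M → ℝ := fun i k => x i k + γ * ∑ j ∈ G.neighborFinset i,
      (if χ s(i, j) = k then (1:ℝ) else 0) * (x j k - x i k) with hw
  have hstepA : ∀ i, ∑ k, (x' i k - abar k) ^ 2 ≤ ∑ k, (w i k - abar k) ^ 2 := by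
    intro i
    have hdiff : T *ᵥ (w i - abar) = x' i - abar := by
      rw [Matrix.mulVec_sub, habar, hx' i]
    calc ∑ k, (x' i k - abar k) ^ 2
        = ∑ k, (T *ᵥ (w i - abar)) k ^ 2 := by
          refine Finset.sum_congr rfl fun k _ => congrArg (· ^ 2) ?_
          simpa using (congrFun hdiff k).symm
      _ ≤ ∑ k, (w i - abar) k ^ 2 := hT _
      _ = ∑ k, (w i k - abar k) ^ 2 := rfl
  have hstepB : ∀ k : Fin M, (∑ i, (w i k - abar k) ^ 2)
      + γ * (1 - γ) * ∑ i, ∑ j ∈ G.neighborFinset i,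
          (if χ s(i, j) = k then (1:ℝ) else 0) * (x i k - x j k) ^ 2
      ≤ ∑ i, (x i k - abar k) ^ 2 := by
    intro k
    set y : Fin N → ℝ := fun i => x i k - abar k with hy
    set ind : Fin N → Fin N → ℝ := fun i j => if χ s(i, j) = k then (1:ℝ) else 0 with hind
    have hsymm : ∀ i j, ind i j = ind j i := by
      intro i j; simp only [hind]
      rw [Sym2.eq_swap]
    have h01 : ∀ i j, ind i j = 0 ∨ ind i j = 1 := by
      intro i j; simp only [hind]
      by_cases h : χ s(i, j) = k
      · right; rw [if_pos h]
      · left; rw [if_neg h]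
    have hcard : ∀ i, ∑ j ∈ G.neighborFinset i, ind i j ≤ 1 := by
      intro i
      simp only [hind]
      rw [Finset.sum_boole]
      have hle : ((G.neighborFinset i).filter (fun j => χ s(i, j) = k)).card ≤ 1 := by
        rw [Finset.card_le_one]
        intro a ha b hb
        rw [Finset.mem_filter] at ha hb
        by_contra hab
        exact hprop i a ha.1 b hb.1 hab (ha.2.trans hb.2.symm)
      exact_mod_cast Nat.cast_le.mpr hle
    have := step_k G hγ0 hγ1 y ind hsymm h01 hcard
    have hweq : ∀ i, w i k - abar k = y i + γ * ∑ j ∈ G.neighborFinset i, ind i j * (y j - y i) := by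
      intro i
      simp only [hw, hy, hind]
      have : ∀ j, x j k - x i k = (x j k - abar k) - (x i k - abar k) := fun j => by ring
      rw [show (∑ j ∈ G.neighborFinset i, (if χ s(i, j) = k then (1:ℝ) else 0) * (x j k - x i k))
          = ∑ j ∈ G.neighborFinset i, (if χ s(i, j) = k then (1:ℝ) else 0)
            * ((x j k - abar k) - (x i k - abar k)) from
        Finset.sum_congr rfl fun j _ => by rw [← this j]]
      ring
    have hseq : ∀ i j, x i k - x j k = y i - y j := by
      intro i j; simp only [hy]; ring
    calc (∑ i, (w i k - abar k) ^ 2)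
        + γ * (1 - γ) * ∑ i, ∑ j ∈ G.neighborFinset i, ind i j * (x i k - x j k) ^ 2
        = (∑ i, (y i + γ * ∑ j ∈ G.neighborFinset i, ind i j * (y j - y i)) ^ 2)
          + γ * (1 - γ) * ∑ i, ∑ j ∈ G.neighborFinset i, ind i j * (y i - y j) ^ 2 := by
          congr 1
          · exact Finset.sum_congr rfl fun i _ => by rw [hweq i]
          · congr 1
            refine Finset.sum_congr rfl fun i _ => Finset.sum_congr rfl fun j _ => ?_
            rw [hseq i j]
      _ ≤ ∑ i, y i ^ 2 := this
      _ = ∑ i, (x i k - abar k) ^ 2 := rfl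
  calc (∑ i, ∑ k, (x' i k - abar k) ^ 2)
      + γ * (1 - γ) * ∑ k, ∑ i, ∑ j ∈ G.neighborFinset i,
          (if χ s(i, j) = k then (1:ℝ) else 0) * (x i k - x j k) ^ 2
      ≤ (∑ i, ∑ k, (w i k - abar k) ^ 2)
        + γ * (1 - γ) * ∑ k, ∑ i, ∑ j ∈ G.neighborFinset i,
          (if χ s(i, j) = k then (1:ℝ) else 0) * (x i k - x j k) ^ 2 := by
        have := Finset.sum_le_sum fun i (_ : i ∈ Finset.univ) => hstepA i
        linarith [this]
    _ = ∑ k, ((∑ i, (w i k - abar k) ^ 2)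
        + γ * (1 - γ) * ∑ i, ∑ j ∈ G.neighborFinset i,
          (if χ s(i, j) = k then (1:ℝ) else 0) * (x i k - x j k) ^ 2) := by
        rw [Finset.sum_add_distrib, Finset.sum_comm, ← Finset.mul_sum]
    _ ≤ ∑ k, ∑ i, (x i k - abar k) ^ 2 := Finset.sum_le_sum fun k _ => hstepB k
    _ = ∑ i, ∑ k, (x i k - abar k) ^ 2 := Finset.sum_comm

end Step

lemma pi_measurableSingletonClass {ι : Type*} [Countable ι] {π : ι → Type*}
    [∀ i, MeasurableSpace (π i)] [∀ i, MeasurableSingletonClass (π i)] :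
    MeasurableSingletonClass (∀ i, π i) := by
  constructor
  intro f
  have : {f} = ⋂ i, (fun g : ∀ i, π i => g i) ⁻¹' {f i} := by
    ext g; simp [funext_iff]
  rw [this]
  exact MeasurableSet.iInter fun i => (measurable_pi_apply i) (measurableSet_singleton (f i))

set_option maxHeartbeats 2000000 in
/-- **channel-wise average consensus, common privacy degree.**
With `G` connected on `{1, …, N}`, `M ≥ 2 d_max − 1`, `γ ∈ (0,1)`, distinct nonzero keys
`s_1, …, s_M`, common degree `p₀ ≤ M − 1`, independent uniformly-distributed random proper
edge colorings `c_t`, and agents updating their encoded states `r_i(t) ∈ ℝ^M` by a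
channel-wise consensus step followed by the projection `T̄_{p₀}`, starting in the column
span of `Φ_{p₀}`, one has, almost surely, `r_i^k(t) → (1/N) Σ_j r_j^k(0)` for every agent
`i` and channel `k`. -/
theorem encoded_states_average_consensus
    {N : ℕ} (G : SimpleGraph (Fin N)) [DecidableRel G.Adj] (hG : G.Connected)
    (M : ℕ) (hM : 2 * G.maxDegree ≤ M + 1)
    (γ : ℝ) (hγ : γ ∈ Set.Ioo (0 : ℝ) 1)
    (s : Fin M → ℝ) (hs_inj : Function.Injective s) (hs_ne : ∀ k, s k ≠ 0)
    (p₀ : ℕ) (hp₀ : p₀ + 1 ≤ M)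
    {Ω : Type*} [MeasurableSpace Ω] (μ : Measure Ω) [IsProbabilityMeasure μ]
    (c : ℕ → Ω → Sym2 (Fin N) → Fin M)
    (hc_meas : ∀ t, Measurable (c t))
    (hc_indep : iIndepFun c μ)
    (hc_proper : ∀ t, ∀ᵐ ω ∂μ, ∀ e ∈ G.edgeSet, ∀ e' ∈ G.edgeSet, e ≠ e' →
      (∃ v : Fin N, v ∈ e ∧ v ∈ e') → c t ω e ≠ c t ω e')
    (hc_unif : ∀ t, ∀ e ∈ G.edgeSet, ∀ k : Fin M,
      μ {ω | c t ω e = k} = 1 / (M : ENNReal))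
    (r : ℕ → Ω → Fin N → Fin M → ℝ)
    (r0 : Fin N → Fin M → ℝ) (hr_init : ∀ ω, r 0 ω = r0)
    (hr0_span : ∀ i : Fin N, r0 i ∈ Submodule.span ℝ
      (Set.range fun ℓ : Fin (p₀ + 1) => fun k : Fin M => vandMat M p₀ s k ℓ))
    (hr_upd : ∀ (t : ℕ) (ω : Ω) (i : Fin N),
      r (t + 1) ω i = (projMat M p₀ s).mulVec
        (fun k => r t ω i k + γ * ∑ j ∈ G.neighborFinset i,
          (if c t ω s(i, j) = k then (1 : ℝ) else 0) * (r t ω j k - r t ω i k))) :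
    ∀ᵐ ω ∂μ, ∀ (i : Fin N) (k : Fin M),
      Tendsto (fun t => r t ω i k) atTop (nhds ((N : ℝ)⁻¹ * ∑ j, r0 j k)) := by
  classical
  obtain ⟨hγ0, hγ1⟩ := hγ
  have hN : 0 < N := by
    have := hG.nonempty
    simpa [Fin.pos_iff_nonempty] using this
  have hM0 : 0 < M := lt_of_lt_of_le (Nat.succ_pos p₀) hp₀
  set T : Matrix (Fin M) (Fin M) ℝ := projMat M p₀ s with hTdef
  have hTnonexp : ∀ v : Fin M → ℝ, ∑ k, (T *ᵥ v) k ^ 2 ≤ ∑ k, v k ^ 2 :=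
    fun v => projMat_nonexp hs_inj hp₀ v
  set abar : Fin M → ℝ := fun k => (N : ℝ)⁻¹ * ∑ j, r0 j k with habar_def
  have hspan_fix : ∀ x : Fin M → ℝ, x ∈ Submodule.span ℝ
      (Set.range fun ℓ : Fin (p₀ + 1) => fun k : Fin M => vandMat M p₀ s k ℓ) →
      T *ᵥ x = x := fun x hx => projMat_fix_span hs_inj hp₀ x hx
  have hsum0_mem : (fun k => ∑ i, r0 i k) ∈ Submodule.span ℝ
      (Set.range fun ℓ : Fin (p₀ + 1) => fun k : Fin M => vandMat M p₀ s k ℓ) := by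
    have : (fun k => ∑ i, r0 i k) = ∑ i, r0 i := by
      funext k; rw [Finset.sum_apply]
    rw [this]
    exact Submodule.sum_mem _ fun i _ => hr0_span i
  have habar_mem : abar ∈ Submodule.span ℝ
      (Set.range fun ℓ : Fin (p₀ + 1) => fun k : Fin M => vandMat M p₀ s k ℓ) := by
    have : abar = (N : ℝ)⁻¹ • (fun k => ∑ i, r0 i k) := by
      funext k; simp [habar_def]
    rw [this]
    exact Submodule.smul_mem _ _ hsum0_mem
  have habar_fix : T *ᵥ abar = abar := hspan_fix abar habar_mem
  -- average invariance
  have hsum_inv : ∀ t ω k, ∑ i, r t ω i k = ∑ i, r0 i k := by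
    intro t
    induction t with
    | zero => intro ω k; rw [hr_init ω]
    | succ t ih =>
      intro ω k
      have hcol : ∀ i, r (t+1) ω i k = ∑ k', T k k' *
          (r t ω i k' + γ * ∑ j ∈ G.neighborFinset i,
            (if c t ω s(i, j) = k' then (1:ℝ) else 0) * (r t ω j k' - r t ω i k')) := by
        intro i; rw [hr_upd t ω i]; rfl
      have hzero : ∀ k', ∑ i, ∑ j ∈ G.neighborFinset i,
          (if c t ω s(i, j) = k' then (1:ℝ) else 0) * (r t ω j k' - r t ω i k') = 0 := by
        intro k'
        apply sum_antisymm_zero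
        intro i j _
        rw [Sym2.eq_swap]
        ring
      have hW : ∀ k', ∑ i, (r t ω i k' + γ * ∑ j ∈ G.neighborFinset i,
          (if c t ω s(i, j) = k' then (1:ℝ) else 0) * (r t ω j k' - r t ω i k'))
          = ∑ i, r0 i k' := by
        intro k'
        rw [Finset.sum_add_distrib, ← Finset.mul_sum, hzero k', mul_zero, add_zero]
        exact ih ω k'
      calc ∑ i, r (t+1) ω i k
          = ∑ i, ∑ k', T k k' * (r t ω i k' + γ * ∑ j ∈ G.neighborFinset i,
              (if c t ω s(i, j) = k' then (1:ℝ) else 0) * (r t ω j k' - r t ω i k')) :=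
            Finset.sum_congr rfl fun i _ => hcol i
        _ = ∑ k', ∑ i, T k k' * (r t ω i k' + γ * ∑ j ∈ G.neighborFinset i,
              (if c t ω s(i, j) = k' then (1:ℝ) else 0) * (r t ω j k' - r t ω i k')) :=
            Finset.sum_comm
        _ = ∑ k', T k k' * ∑ i, (r t ω i k' + γ * ∑ j ∈ G.neighborFinset i,
              (if c t ω s(i, j) = k' then (1:ℝ) else 0) * (r t ω j k' - r t ω i k')) :=
            Finset.sum_congr rfl fun k' _ => (Finset.mul_sum _ _ _).symm
        _ = ∑ k', T k k' * ∑ i, r0 i k' :=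
            Finset.sum_congr rfl fun k' _ => by rw [hW k']
        _ = (T *ᵥ fun k' => ∑ i, r0 i k') k := rfl
        _ = ∑ i, r0 i k := by rw [hspan_fix _ hsum0_mem]
  -- measurability
  have hmeas : ∀ t i k, Measurable fun ω => r t ω i k := by
    intro t
    induction t with
    | zero =>
      intro i k
      have : (fun ω => r 0 ω i k) = fun _ => r0 i k := by funext ω; rw [hr_init ω]
      rw [this]; exact measurable_const
    | succ t ih =>
      intro i k
      have heq : (fun ω => r (t+1) ω i k) = fun ω => ∑ k', T k k' *
          (r t ω i k' + γ * ∑ j ∈ G.neighborFinset i,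
            (if c t ω s(i, j) = k' then (1:ℝ) else 0) * (r t ω j k' - r t ω i k')) := by
        funext ω; rw [hr_upd t ω i]; rfl
      rw [heq]
      apply Finset.measurable_sum
      intro k' _
      apply Measurable.const_mul
      apply Measurable.add (ih i k')
      apply Measurable.const_mul
      apply Finset.measurable_sum
      intro j _
      have hset : MeasurableSet {ω | c t ω s(i, j) = k'} :=
        ((measurable_pi_apply s(i, j)).comp (hc_meas t)) (measurableSet_singleton k')
      exact (Measurable.ite hset measurable_const measurable_const).mul ((ih j k').sub (ih i k'))
  -- boundedness
  have hbd : ∀ t, ∃ C : ℝ, 0 ≤ C ∧ ∀ ω i k, |r t ω i k| ≤ C := by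
    intro t
    induction t with
    | zero =>
      refine ⟨∑ i, ∑ k, |r0 i k|,
        Finset.sum_nonneg fun i _ => Finset.sum_nonneg fun k _ => abs_nonneg _, ?_⟩
      intro ω i k
      rw [hr_init ω]
      calc |r0 i k| ≤ ∑ k', |r0 i k'| :=
            Finset.single_le_sum (f := fun k' => |r0 i k'|)
              (fun k' _ => abs_nonneg _) (Finset.mem_univ k)
        _ ≤ ∑ i', ∑ k', |r0 i' k'| :=
            Finset.single_le_sum (f := fun i' => ∑ k', |r0 i' k'|)
              (fun i' _ => Finset.sum_nonneg fun k' _ => abs_nonneg _) (Finset.mem_univ i)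
    | succ t ih =>
      obtain ⟨C, hC0, hC⟩ := ih
      set CT : ℝ := ∑ k1, ∑ k2, |T k1 k2| with hCT
      have hCT0 : 0 ≤ CT :=
        Finset.sum_nonneg fun k1 _ => Finset.sum_nonneg fun k2 _ => abs_nonneg _
      set B : ℝ := C + (N : ℝ) * (2 * C) with hB
      have hB0 : 0 ≤ B := by positivity
      refine ⟨CT * B, mul_nonneg hCT0 hB0, ?_⟩
      intro ω i k
      have hw : ∀ k', |r t ω i k' + γ * ∑ j ∈ G.neighborFinset i,
          (if c t ω s(i, j) = k' then (1:ℝ) else 0) * (r t ω j k' - r t ω i k')| ≤ B := by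
        intro k'
        have hterm : ∀ j ∈ G.neighborFinset i,
            |(if c t ω s(i, j) = k' then (1:ℝ) else 0) * (r t ω j k' - r t ω i k')| ≤ 2 * C := by
          intro j _
          rw [abs_mul]
          have h1 : |(if c t ω s(i, j) = k' then (1:ℝ) else 0)| ≤ 1 := by
            by_cases h : c t ω s(i, j) = k' <;> simp [h]
          have h2 : |r t ω j k' - r t ω i k'| ≤ 2 * C := by
            have := (abs_add_le (r t ω j k') (-(r t ω i k'))).trans_eq (by rw [abs_neg])
            rw [← sub_eq_add_neg] at this
            have := this.trans (add_le_add (hC ω j k') (hC ω i k'))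
            linarith
          calc |(if c t ω s(i, j) = k' then (1:ℝ) else 0)| * |r t ω j k' - r t ω i k'|
              ≤ 1 * (2 * C) := mul_le_mul h1 h2 (abs_nonneg _) zero_le_one
            _ = 2 * C := one_mul _
        have hsumabs : |∑ j ∈ G.neighborFinset i,
            (if c t ω s(i, j) = k' then (1:ℝ) else 0) * (r t ω j k' - r t ω i k')|
            ≤ (N : ℝ) * (2 * C) := by
          calc |∑ j ∈ G.neighborFinset i,
              (if c t ω s(i, j) = k' then (1:ℝ) else 0) * (r t ω j k' - r t ω i k')|
              ≤ ∑ j ∈ G.neighborFinset i,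
                |(if c t ω s(i, j) = k' then (1:ℝ) else 0) * (r t ω j k' - r t ω i k')| :=
                Finset.abs_sum_le_sum_abs _ _
            _ ≤ ∑ _j ∈ G.neighborFinset i, 2 * C := Finset.sum_le_sum hterm
            _ = ((G.neighborFinset i).card : ℝ) * (2 * C) := by
                rw [Finset.sum_const, nsmul_eq_mul]
            _ ≤ (N : ℝ) * (2 * C) := by
                have hcard : (G.neighborFinset i).card ≤ N := by
                  calc (G.neighborFinset i).card ≤ Fintype.card (Fin N) :=
                      Finset.card_le_univ _
                    _ = N := Fintype.card_fin N
                have : ((G.neighborFinset i).card : ℝ) ≤ (N : ℝ) := Nat.cast_le.mpr hcard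
                nlinarith [hC0]
        calc |r t ω i k' + γ * ∑ j ∈ G.neighborFinset i,
            (if c t ω s(i, j) = k' then (1:ℝ) else 0) * (r t ω j k' - r t ω i k')|
            ≤ |r t ω i k'| + |γ * ∑ j ∈ G.neighborFinset i,
              (if c t ω s(i, j) = k' then (1:ℝ) else 0) * (r t ω j k' - r t ω i k')| :=
              abs_add_le _ _
          _ ≤ C + 1 * ((N : ℝ) * (2 * C)) := by
              refine add_le_add (hC ω i k') ?_
              rw [abs_mul]
              refine mul_le_mul ?_ hsumabs (abs_nonneg _) zero_le_one
              rw [abs_of_pos hγ0]; exact le_of_lt hγ1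
          _ = B := by rw [hB]; ring
      have hup : r (t+1) ω i k = ∑ k', T k k' *
          (r t ω i k' + γ * ∑ j ∈ G.neighborFinset i,
            (if c t ω s(i, j) = k' then (1:ℝ) else 0) * (r t ω j k' - r t ω i k')) := by
        rw [hr_upd t ω i]; rfl
      rw [hup]
      calc |∑ k', T k k' * (r t ω i k' + γ * ∑ j ∈ G.neighborFinset i,
            (if c t ω s(i, j) = k' then (1:ℝ) else 0) * (r t ω j k' - r t ω i k'))|
          ≤ ∑ k', |T k k' * (r t ω i k' + γ * ∑ j ∈ G.neighborFinset i,
            (if c t ω s(i, j) = k' then (1:ℝ) else 0) * (r t ω j k' - r t ω i k'))| :=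
            Finset.abs_sum_le_sum_abs _ _
        _ ≤ ∑ k', |T k k'| * B := by
            refine Finset.sum_le_sum fun k' _ => ?_
            rw [abs_mul]
            exact mul_le_mul_of_nonneg_left (hw k') (abs_nonneg _)
        _ = (∑ k', |T k k'|) * B := (Finset.sum_mul _ _ _).symm
        _ ≤ CT * B := by
            refine mul_le_mul_of_nonneg_right ?_ hB0
            exact Finset.single_le_sum (f := fun k1 => ∑ k2, |T k1 k2|)
              (fun k1 _ => Finset.sum_nonneg fun k2 _ => abs_nonneg _) (Finset.mem_univ k)
  -- quantities
  set V : ℕ → Ω → ℝ := fun t ω => ∑ i, ∑ k, (r t ω i k - abar k) ^ 2 with hVdef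
  set S : ℕ → Ω → ℝ := fun t ω => ∑ k, ∑ i, ∑ j ∈ G.neighborFinset i,
      (if c t ω s(i, j) = k then (1:ℝ) else 0) * (r t ω i k - r t ω j k) ^ 2 with hSdef
  have hV_nonneg : ∀ t ω, 0 ≤ V t ω := fun t ω =>
    Finset.sum_nonneg fun i _ => Finset.sum_nonneg fun k _ => sq_nonneg _
  have hS_nonneg : ∀ t ω, 0 ≤ S t ω := fun t ω =>
    Finset.sum_nonneg fun k _ => Finset.sum_nonneg fun i _ => Finset.sum_nonneg fun j _ =>
      mul_nonneg (by by_cases h : c t ω s(i, j) = k <;> simp [h]) (sq_nonneg _)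
  -- pathwise contraction
  have hstep : ∀ t, ∀ᵐ ω ∂μ, V (t+1) ω + γ * (1 - γ) * S t ω ≤ V t ω := by
    intro t
    filter_upwards [hc_proper t] with ω hω
    have hprop : ∀ i : Fin N, ∀ j ∈ G.neighborFinset i, ∀ j' ∈ G.neighborFinset i,
        j ≠ j' → c t ω s(i, j) ≠ c t ω s(i, j') := by
      intro i j hj j' hj' hjj'
      rw [SimpleGraph.mem_neighborFinset] at hj hj'
      refine hω s(i, j) ?_ s(i, j') ?_ ?_ ⟨i, ?_, ?_⟩
      · rwa [SimpleGraph.mem_edgeSet]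
      · rwa [SimpleGraph.mem_edgeSet]
      · intro h; exact hjj' (Sym2.congr_right.mp h)
      · exact Sym2.mem_mk_left i j
      · exact Sym2.mem_mk_left i j'
    exact step_ineq G hγ0 hγ1 T hTnonexp abar habar_fix (r t ω) (r (t+1) ω) (c t ω)
      hprop (fun i => hr_upd t ω i)
  -- integrability helpers
  have hint : ∀ (f : Ω → ℝ), Measurable f → (∃ C : ℝ, ∀ ω, |f ω| ≤ C) → Integrable f μ := by
    rintro f hf ⟨C, hC⟩
    exact ⟨hf.aestronglyMeasurable,
      HasFiniteIntegral.of_bounded (C := C) (ae_of_all μ fun ω => by simpa using hC ω)⟩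
  have hVmeas : ∀ t, Measurable (V t) := fun t =>
    Finset.measurable_sum _ fun i _ => Finset.measurable_sum _ fun k _ =>
      ((hmeas t i k).sub measurable_const).pow_const 2
  have habs_sum : ∀ {α : Type} (F : Finset α) (g : α → ℝ) (b : ℝ),
      (∀ j ∈ F, |g j| ≤ b) → |∑ j ∈ F, g j| ≤ (F.card : ℝ) * b := by
    intro α F g b hb
    calc |∑ j ∈ F, g j| ≤ ∑ j ∈ F, |g j| := Finset.abs_sum_le_sum_abs _ _
      _ ≤ ∑ _j ∈ F, b := Finset.sum_le_sum hb
      _ = (F.card : ℝ) * b := by rw [Finset.sum_const, nsmul_eq_mul]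
  have hVbd : ∀ t, ∃ C : ℝ, ∀ ω, |V t ω| ≤ C := by
    intro t
    obtain ⟨C, hC0, hC⟩ := hbd t
    set Ca : ℝ := ∑ k, |abar k| with hCa
    have hCa0 : 0 ≤ Ca := Finset.sum_nonneg fun k _ => abs_nonneg _
    have hCak : ∀ k, |abar k| ≤ Ca := fun k =>
      Finset.single_le_sum (f := fun k => |abar k|) (fun k _ => abs_nonneg _) (Finset.mem_univ k)
    refine ⟨(N : ℝ) * ((M : ℝ) * (C + Ca) ^ 2), fun ω => ?_⟩
    have hterm : ∀ i k, |(r t ω i k - abar k) ^ 2| ≤ (C + Ca) ^ 2 := by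
      intro i k
      rw [abs_of_nonneg (sq_nonneg _)]
      have h1 : |r t ω i k - abar k| ≤ C + Ca := by
        have := (abs_add_le (r t ω i k) (-(abar k))).trans_eq (by rw [abs_neg])
        rw [← sub_eq_add_neg] at this
        exact this.trans (add_le_add (hC ω i k) (hCak k))
      nlinarith [h1, abs_nonneg (r t ω i k - abar k), sq_abs (r t ω i k - abar k)]
    have h2 : ∀ i, |∑ k, (r t ω i k - abar k) ^ 2| ≤ (M : ℝ) * (C + Ca) ^ 2 := by
      intro i
      have := habs_sum Finset.univ (fun k => (r t ω i k - abar k) ^ 2) ((C + Ca) ^ 2)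
        (fun k _ => hterm i k)
      simpa [Finset.card_univ] using this
    have := habs_sum Finset.univ (fun i => ∑ k, (r t ω i k - abar k) ^ 2)
      ((M : ℝ) * (C + Ca) ^ 2) (fun i _ => h2 i)
    simpa [Finset.card_univ] using this
  have hVint : ∀ t, Integrable (V t) μ := fun t => hint _ (hVmeas t) (hVbd t)
  have hSmeas : ∀ t, Measurable (S t) := by
    intro t
    refine Finset.measurable_sum _ fun k _ => Finset.measurable_sum _ fun i _ =>
      Finset.measurable_sum _ fun j _ => ?_
    have hset : MeasurableSet {ω | c t ω s(i, j) = k} :=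
      ((measurable_pi_apply s(i, j)).comp (hc_meas t)) (measurableSet_singleton k)
    exact (Measurable.ite hset measurable_const measurable_const).mul
      (((hmeas t i k).sub (hmeas t j k)).pow_const 2)
  have hSbd : ∀ t, ∃ C : ℝ, ∀ ω, |S t ω| ≤ C := by
    intro t
    obtain ⟨C, hC0, hC⟩ := hbd t
    refine ⟨(M : ℝ) * ((N : ℝ) * ((N : ℝ) * (2 * C) ^ 2)), fun ω => ?_⟩
    have hterm : ∀ k i, ∀ j ∈ G.neighborFinset i,
        |(if c t ω s(i, j) = k then (1:ℝ) else 0) * (r t ω i k - r t ω j k) ^ 2|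
        ≤ (2 * C) ^ 2 := by
      intro k i j _
      rw [abs_mul]
      have h1 : |(if c t ω s(i, j) = k then (1:ℝ) else 0)| ≤ 1 := by
        by_cases h : c t ω s(i, j) = k <;> simp [h]
      have h2 : |r t ω i k - r t ω j k| ≤ 2 * C := by
        have := (abs_add_le (r t ω i k) (-(r t ω j k))).trans_eq (by rw [abs_neg])
        rw [← sub_eq_add_neg] at this
        have := this.trans (add_le_add (hC ω i k) (hC ω j k))
        linarith
      have h3 : |(r t ω i k - r t ω j k) ^ 2| ≤ (2 * C) ^ 2 := by
        rw [abs_pow]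
        have h0 : (0:ℝ) ≤ |r t ω i k - r t ω j k| := abs_nonneg _
        nlinarith [h2, h0]
      calc |(if c t ω s(i, j) = k then (1:ℝ) else 0)| * |(r t ω i k - r t ω j k) ^ 2|
          ≤ 1 * (2 * C) ^ 2 := mul_le_mul h1 h3 (abs_nonneg _) zero_le_one
        _ = (2 * C) ^ 2 := one_mul _
    have hinner : ∀ k i, |∑ j ∈ G.neighborFinset i,
        (if c t ω s(i, j) = k then (1:ℝ) else 0) * (r t ω i k - r t ω j k) ^ 2|
        ≤ (N : ℝ) * (2 * C) ^ 2 := by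
      intro k i
      have := habs_sum (G.neighborFinset i) _ ((2 * C) ^ 2) (hterm k i)
      refine this.trans ?_
      have hcard : ((G.neighborFinset i).card : ℝ) ≤ (N : ℝ) := by
        exact_mod_cast (Finset.card_le_univ _).trans_eq (Fintype.card_fin N)
      nlinarith [hcard, sq_nonneg (2 * C)]
    have hmid : ∀ k, |∑ i, ∑ j ∈ G.neighborFinset i,
        (if c t ω s(i, j) = k then (1:ℝ) else 0) * (r t ω i k - r t ω j k) ^ 2|
        ≤ (N : ℝ) * ((N : ℝ) * (2 * C) ^ 2) := by
      intro k
      have := habs_sum Finset.univ _ ((N : ℝ) * (2 * C) ^ 2) (fun i _ => hinner k i)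
      simpa [Finset.card_univ] using this
    have := habs_sum Finset.univ _ ((N : ℝ) * ((N : ℝ) * (2 * C) ^ 2)) (fun k _ => hmid k)
    rw [Finset.card_univ, Fintype.card_fin] at this
    exact this
  have hSint : ∀ t, Integrable (S t) μ := fun t => hint _ (hSmeas t) (hSbd t)
  -- representation of r t as a function of the past colorings
  have hrep : ∀ t : ℕ, ∃ g : ((u : (Finset.range t : Finset ℕ)) → Sym2 (Fin N) → Fin M) →
      (Fin N → Fin M → ℝ), ∀ ω, r t ω = g (fun u => c u ω) := by
    intro t
    induction t with
    | zero => exact ⟨fun _ => r0, fun ω => hr_init ω⟩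
    | succ t ih =>
      obtain ⟨g, hg⟩ := ih
      refine ⟨fun v => fun i => T *ᵥ (fun k =>
        g (fun u => v ⟨u.1, Finset.mem_range.mpr (Nat.lt_succ_of_lt (Finset.mem_range.mp u.2))⟩) i k
          + γ * ∑ j ∈ G.neighborFinset i,
            (if v ⟨t, Finset.self_mem_range_succ t⟩ s(i, j) = k then (1:ℝ) else 0) *
              (g (fun u => v ⟨u.1,
                  Finset.mem_range.mpr (Nat.lt_succ_of_lt (Finset.mem_range.mp u.2))⟩) j k
               - g (fun u => v ⟨u.1,
                  Finset.mem_range.mpr (Nat.lt_succ_of_lt (Finset.mem_range.mp u.2))⟩) i k)),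
        fun ω => ?_⟩
      funext i
      rw [hr_upd t ω i, hg ω]
  -- the key factorization identity
  have hkey : ∀ (t : ℕ) (i j : Fin N) (k : Fin M), G.Adj i j →
      ∫ ω, (if c t ω s(i, j) = k then (1:ℝ) else 0) * (r t ω i k - r t ω j k) ^ 2 ∂μ
      = (M : ℝ)⁻¹ * ∫ ω, (r t ω i k - r t ω j k) ^ 2 ∂μ := by
    intro t i j k hij
    obtain ⟨g, hg⟩ := hrep t
    haveI i1 : MeasurableSingletonClass (Sym2 (Fin N) → Fin M) := pi_measurableSingletonClass
    haveI i2 : MeasurableSingletonClass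
        ((u : (Finset.range t : Finset ℕ)) → Sym2 (Fin N) → Fin M) :=
      pi_measurableSingletonClass
    haveI i3 : MeasurableSingletonClass
        ((u : ({t} : Finset ℕ)) → Sym2 (Fin N) → Fin M) :=
      pi_measurableSingletonClass
    have hbase : IndepFun (fun ω => fun u : (Finset.range t : Finset ℕ) => c u ω)
        (fun ω => fun u : ({t} : Finset ℕ) => c u ω) μ :=
      hc_indep.indepFun_finset (Finset.range t) {t}
        (by simp [Finset.disjoint_singleton_right, Finset.mem_range]) hc_meas
    set X : Ω → ℝ := fun ω => if c t ω s(i, j) = k then (1:ℝ) else 0 with hXdef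
    set Y : Ω → ℝ := fun ω => (r t ω i k - r t ω j k) ^ 2 with hYdef
    have hXY : IndepFun X Y μ := by
      have hcomp := (hbase.symm.comp
        (φ := fun v : (u : ({t} : Finset ℕ)) → Sym2 (Fin N) → Fin M =>
          if v ⟨t, Finset.mem_singleton_self t⟩ s(i, j) = k then (1:ℝ) else 0)
        (ψ := fun v : (u : (Finset.range t : Finset ℕ)) → Sym2 (Fin N) → Fin M =>
          (g v i k - g v j k) ^ 2)
        (measurable_of_countable _) (measurable_of_countable _))
      have hXeq : X = (fun v : (u : ({t} : Finset ℕ)) → Sym2 (Fin N) → Fin M =>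
          if v ⟨t, Finset.mem_singleton_self t⟩ s(i, j) = k then (1:ℝ) else 0) ∘
          (fun ω => fun u : ({t} : Finset ℕ) => c u ω) := rfl
      have hYeq : Y = (fun v : (u : (Finset.range t : Finset ℕ)) → Sym2 (Fin N) → Fin M =>
          (g v i k - g v j k) ^ 2) ∘
          (fun ω => fun u : (Finset.range t : Finset ℕ) => c u ω) := by
        funext ω
        simp only [Function.comp_apply, hYdef]
        rw [hg ω]
      rw [hXdef, hXeq, hYeq] at *
      exact hcomp
    have hXint : Integrable X μ := by
      refine hint X ?_ ⟨1, fun ω => ?_⟩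
      · have hset : MeasurableSet {ω | c t ω s(i, j) = k} :=
          ((measurable_pi_apply s(i, j)).comp (hc_meas t)) (measurableSet_singleton k)
        exact Measurable.ite hset measurable_const measurable_const
      · by_cases h : c t ω s(i, j) = k <;> simp [hXdef, h]
    have hYint : Integrable Y μ := by
      obtain ⟨C, hC0, hC⟩ := hbd t
      refine hint Y (((hmeas t i k).sub (hmeas t j k)).pow_const 2) ⟨(2*C)^2, fun ω => ?_⟩
      rw [show Y ω = (r t ω i k - r t ω j k) ^ 2 from rfl, abs_of_nonneg (sq_nonneg _)]
      have h2 : |r t ω i k - r t ω j k| ≤ 2 * C := by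
        have := (abs_add_le (r t ω i k) (-(r t ω j k))).trans_eq (by rw [abs_neg])
        rw [← sub_eq_add_neg] at this
        have := this.trans (add_le_add (hC ω i k) (hC ω j k))
        linarith
      nlinarith [h2, abs_nonneg (r t ω i k - r t ω j k), sq_abs (r t ω i k - r t ω j k)]
    have hmul := IndepFun.integral_mul_eq_mul_integral hXY hXint.aestronglyMeasurable hYint.aestronglyMeasurable
    have hXval : ∫ ω, X ω ∂μ = (M : ℝ)⁻¹ := by
      have hset : MeasurableSet {ω | c t ω s(i, j) = k} :=
        ((measurable_pi_apply s(i, j)).comp (hc_meas t)) (measurableSet_singleton k)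
      have hXind : X = Set.indicator {ω | c t ω s(i, j) = k} (fun _ => (1:ℝ)) := by
        funext ω
        by_cases h : c t ω s(i, j) = k <;>
          simp [hXdef, Set.indicator_apply, h]
      rw [hXind, integral_indicator hset, setIntegral_const, smul_eq_mul, mul_one]
      rw [Measure.real, hc_unif t s(i, j) (by rwa [SimpleGraph.mem_edgeSet]) k]
      rw [one_div, ENNReal.toReal_inv]
      simp
    calc ∫ ω, (if c t ω s(i, j) = k then (1:ℝ) else 0) * (r t ω i k - r t ω j k) ^ 2 ∂μ
        = ∫ ω, (X * Y) ω ∂μ := rfl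
      _ = (∫ ω, X ω ∂μ) * ∫ ω, Y ω ∂μ := hmul
      _ = (M : ℝ)⁻¹ * ∫ ω, (r t ω i k - r t ω j k) ^ 2 ∂μ := by rw [hXval]
  -- spectral gap
  obtain ⟨lam, hlam0, hlam⟩ := exists_spectral_gap G hG
  have hgapV : ∀ t ω, lam * V t ω ≤ ∑ k, ∑ i, ∑ j ∈ G.neighborFinset i,
      (r t ω i k - r t ω j k) ^ 2 := by
    intro t ω
    have hVsw : V t ω = ∑ k : Fin M, ∑ i, (r t ω i k - abar k) ^ 2 := Finset.sum_comm
    rw [hVsw, Finset.mul_sum]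
    refine Finset.sum_le_sum fun k _ => ?_
    have h0 : ∑ i, (r t ω i k - abar k) = 0 := by
      rw [Finset.sum_sub_distrib, hsum_inv t ω k, Finset.sum_const, Finset.card_univ,
        Fintype.card_fin, nsmul_eq_mul]
      have habk : abar k = (N : ℝ)⁻¹ * ∑ j, r0 j k := rfl
      rw [habk]
      have hNne : (N:ℝ) ≠ 0 := Nat.cast_ne_zero.mpr hN.ne'
      field_simp
      ring
    have := hlam (fun i => r t ω i k - abar k) h0
    calc lam * ∑ i, (r t ω i k - abar k) ^ 2
        ≤ ∑ i, ∑ j ∈ G.neighborFinset i,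
            ((r t ω i k - abar k) - (r t ω j k - abar k)) ^ 2 := this
      _ = ∑ i, ∑ j ∈ G.neighborFinset i, (r t ω i k - r t ω j k) ^ 2 :=
          Finset.sum_congr rfl fun i _ => Finset.sum_congr rfl fun j _ => by ring
  -- lower bound for the integral of S
  have hSlow : ∀ t, (M : ℝ)⁻¹ * (lam * ∫ ω, V t ω ∂μ) ≤ ∫ ω, S t ω ∂μ := by
    intro t
    obtain ⟨C, hC0, hC⟩ := hbd t
    have hq_meas : ∀ (i j : Fin N) (k : Fin M),
        Measurable fun ω => (r t ω i k - r t ω j k) ^ 2 := fun i j k =>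
      ((hmeas t i k).sub (hmeas t j k)).pow_const 2
    have hq_bd : ∀ (i j : Fin N) (k : Fin M) (ω : Ω),
        |(r t ω i k - r t ω j k) ^ 2| ≤ (2*C)^2 := by
      intro i j k ω
      rw [abs_of_nonneg (sq_nonneg _)]
      have h2 : |r t ω i k - r t ω j k| ≤ 2 * C := by
        have := (abs_add_le (r t ω i k) (-(r t ω j k))).trans_eq (by rw [abs_neg])
        rw [← sub_eq_add_neg] at this
        have := this.trans (add_le_add (hC ω i k) (hC ω j k))
        linarith
      nlinarith [h2, abs_nonneg (r t ω i k - r t ω j k), sq_abs (r t ω i k - r t ω j k)]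
    have hq_int : ∀ (i j : Fin N) (k : Fin M),
        Integrable (fun ω => (r t ω i k - r t ω j k) ^ 2) μ := fun i j k =>
      hint _ (hq_meas i j k) ⟨(2*C)^2, hq_bd i j k⟩
    have hχq_int : ∀ (k : Fin M) (i j : Fin N), Integrable
        (fun ω => (if c t ω s(i, j) = k then (1:ℝ) else 0) * (r t ω i k - r t ω j k) ^ 2) μ := by
      intro k i j
      have hset : MeasurableSet {ω | c t ω s(i, j) = k} :=
        ((measurable_pi_apply s(i, j)).comp (hc_meas t)) (measurableSet_singleton k)
      refine hint _ ((Measurable.ite hset measurable_const measurable_const).mul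
        (hq_meas i j k)) ⟨(2*C)^2, fun ω => ?_⟩
      rw [abs_mul]
      have h1 : |(if c t ω s(i, j) = k then (1:ℝ) else 0)| ≤ 1 := by
        by_cases h : c t ω s(i, j) = k <;> simp [h]
      have h2 := hq_bd i j k ω
      nlinarith [abs_nonneg ((r t ω i k - r t ω j k) ^ 2), h1, h2]
    have hSeq : ∫ ω, S t ω ∂μ = ∑ k, ∑ i, ∑ j ∈ G.neighborFinset i,
        ∫ ω, (if c t ω s(i, j) = k then (1:ℝ) else 0) * (r t ω i k - r t ω j k) ^ 2 ∂μ := by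
      calc ∫ ω, S t ω ∂μ
          = ∑ k, ∫ ω, (∑ i, ∑ j ∈ G.neighborFinset i,
              (if c t ω s(i, j) = k then (1:ℝ) else 0) * (r t ω i k - r t ω j k) ^ 2) ∂μ :=
            integral_finset_sum _ (fun k _ => integrable_finset_sum _ fun i _ =>
              integrable_finset_sum _ fun j _ => hχq_int k i j)
        _ = ∑ k, ∑ i, ∫ ω, (∑ j ∈ G.neighborFinset i,
              (if c t ω s(i, j) = k then (1:ℝ) else 0) * (r t ω i k - r t ω j k) ^ 2) ∂μ :=
            Finset.sum_congr rfl fun k _ => integral_finset_sum _ (fun i _ =>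
              integrable_finset_sum _ fun j _ => hχq_int k i j)
        _ = ∑ k, ∑ i, ∑ j ∈ G.neighborFinset i,
              ∫ ω, (if c t ω s(i, j) = k then (1:ℝ) else 0) * (r t ω i k - r t ω j k) ^ 2 ∂μ :=
            Finset.sum_congr rfl fun k _ => Finset.sum_congr rfl fun i _ =>
              integral_finset_sum _ (fun j _ => hχq_int k i j)
    have hQint : Integrable (fun ω => ∑ k, ∑ i, ∑ j ∈ G.neighborFinset i,
        (r t ω i k - r t ω j k) ^ 2) μ :=
      integrable_finset_sum _ fun k _ => integrable_finset_sum _ fun i _ =>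
        integrable_finset_sum _ fun j _ => hq_int i j k
    have hQeq : ∫ ω, (∑ k, ∑ i, ∑ j ∈ G.neighborFinset i,
        (r t ω i k - r t ω j k) ^ 2) ∂μ
        = ∑ k, ∑ i, ∑ j ∈ G.neighborFinset i, ∫ ω, (r t ω i k - r t ω j k) ^ 2 ∂μ := by
      calc ∫ ω, (∑ k, ∑ i, ∑ j ∈ G.neighborFinset i, (r t ω i k - r t ω j k) ^ 2) ∂μ
          = ∑ k, ∫ ω, (∑ i, ∑ j ∈ G.neighborFinset i, (r t ω i k - r t ω j k) ^ 2) ∂μ :=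
            integral_finset_sum _ (fun k _ => integrable_finset_sum _ fun i _ =>
              integrable_finset_sum _ fun j _ => hq_int i j k)
        _ = ∑ k, ∑ i, ∫ ω, (∑ j ∈ G.neighborFinset i, (r t ω i k - r t ω j k) ^ 2) ∂μ :=
            Finset.sum_congr rfl fun k _ => integral_finset_sum _ (fun i _ =>
              integrable_finset_sum _ fun j _ => hq_int i j k)
        _ = ∑ k, ∑ i, ∑ j ∈ G.neighborFinset i, ∫ ω, (r t ω i k - r t ω j k) ^ 2 ∂μ :=
            Finset.sum_congr rfl fun k _ => Finset.sum_congr rfl fun i _ =>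
              integral_finset_sum _ (fun j _ => hq_int i j k)
    have hMinv0 : (0:ℝ) ≤ (M:ℝ)⁻¹ := inv_nonneg.mpr (Nat.cast_nonneg M)
    calc (M : ℝ)⁻¹ * (lam * ∫ ω, V t ω ∂μ)
        ≤ (M : ℝ)⁻¹ * ∫ ω, (∑ k, ∑ i, ∑ j ∈ G.neighborFinset i,
            (r t ω i k - r t ω j k) ^ 2) ∂μ := by
          refine mul_le_mul_of_nonneg_left ?_ hMinv0
          rw [← integral_const_mul]
          exact integral_mono ((hVint t).const_mul lam) hQint (fun ω => hgapV t ω)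
      _ = (M : ℝ)⁻¹ * ∑ k, ∑ i, ∑ j ∈ G.neighborFinset i,
            ∫ ω, (r t ω i k - r t ω j k) ^ 2 ∂μ := by rw [hQeq]
      _ = ∑ k, ∑ i, ∑ j ∈ G.neighborFinset i,
            (M : ℝ)⁻¹ * ∫ ω, (r t ω i k - r t ω j k) ^ 2 ∂μ := by
          simp only [Finset.mul_sum]
      _ = ∑ k, ∑ i, ∑ j ∈ G.neighborFinset i,
            ∫ ω, (if c t ω s(i, j) = k then (1:ℝ) else 0) * (r t ω i k - r t ω j k) ^ 2 ∂μ := by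
          refine Finset.sum_congr rfl fun k _ => Finset.sum_congr rfl fun i _ =>
            Finset.sum_congr rfl fun j hj => ?_
          rw [SimpleGraph.mem_neighborFinset] at hj
          exact (hkey t i j k hj).symm
      _ = ∫ ω, S t ω ∂μ := hSeq.symm
  -- expected contraction
  have hEstep : ∀ t, ∫ ω, V (t+1) ω ∂μ
      ≤ (1 - γ * (1 - γ) * ((M:ℝ)⁻¹ * lam)) * ∫ ω, V t ω ∂μ := by
    intro t
    have h1 : ∫ ω, (V (t+1) ω + γ * (1-γ) * S t ω) ∂μ ≤ ∫ ω, V t ω ∂μ :=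
      integral_mono_ae ((hVint (t+1)).add ((hSint t).const_mul _)) (hVint t) (hstep t)
    rw [integral_add (hVint (t+1)) ((hSint t).const_mul _), integral_const_mul] at h1
    have h2 := hSlow t
    have hγγ : (0:ℝ) ≤ γ * (1 - γ) := le_of_lt (mul_pos hγ0 (by linarith))
    nlinarith [h1, h2, mul_le_mul_of_nonneg_left h2 hγγ]
  set ρ : ℝ := max (1 - γ * (1 - γ) * ((M:ℝ)⁻¹ * lam)) 0 with hρdef
  have hρ0 : 0 ≤ ρ := le_max_right _ _
  have hρ1 : ρ < 1 := by
    apply max_lt _ one_pos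
    have hMpos : (0:ℝ) < (M:ℝ)⁻¹ := inv_pos.mpr (Nat.cast_pos.mpr hM0)
    nlinarith [mul_pos (mul_pos hγ0 (by linarith : (0:ℝ) < 1 - γ)) (mul_pos hMpos hlam0)]
  have hVrec : ∀ t, ∫ ω, V t ω ∂μ ≤ ρ ^ t * ∫ ω, V 0 ω ∂μ := by
    intro t
    induction t with
    | zero => simp
    | succ t ih =>
      have h1 := hEstep t
      have h2 : (1 - γ * (1 - γ) * ((M:ℝ)⁻¹ * lam)) * ∫ ω, V t ω ∂μ
          ≤ ρ * ∫ ω, V t ω ∂μ :=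
        mul_le_mul_of_nonneg_right (le_max_left _ _) (integral_nonneg fun ω => hV_nonneg t ω)
      have h3 : ρ * ∫ ω, V t ω ∂μ ≤ ρ * (ρ ^ t * ∫ ω, V 0 ω ∂μ) :=
        mul_le_mul_of_nonneg_left ih hρ0
      calc ∫ ω, V (t+1) ω ∂μ ≤ ρ * (ρ ^ t * ∫ ω, V 0 ω ∂μ) :=
          le_trans h1 (le_trans h2 h3)
        _ = ρ ^ (t+1) * ∫ ω, V 0 ω ∂μ := by ring
  set C0 : ℝ := ∫ ω, V 0 ω ∂μ with hC0def
  have hC00 : 0 ≤ C0 := integral_nonneg fun ω => hV_nonneg 0 ω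
  -- Borel–Cantelli
  have hBC : ∀ n : ℕ, ∀ᵐ ω ∂μ, ∀ᶠ t in atTop, V t ω < 1 / ((n:ℝ) + 1) := by
    intro n
    set ε : ℝ := 1 / ((n:ℝ) + 1) with hεdef
    have hε0 : 0 < ε := by positivity
    have hmeasbound : ∀ t, μ {ω | ε ≤ V t ω} ≤ ENNReal.ofReal ((C0 / ε) * ρ ^ t) := by
      intro t
      have hmark := mul_meas_ge_le_integral_of_nonneg
        (ae_of_all μ fun ω => hV_nonneg t ω) (hVint t) ε
      have h1 : (μ {ω | ε ≤ V t ω}).toReal ≤ (C0 / ε) * ρ ^ t := by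
        rw [div_mul_eq_mul_div, le_div_iff₀ hε0]
        calc (μ {ω | ε ≤ V t ω}).toReal * ε = ε * (μ {ω | ε ≤ V t ω}).toReal := mul_comm _ _
          _ ≤ ∫ ω, V t ω ∂μ := hmark
          _ ≤ ρ ^ t * C0 := hVrec t
          _ = C0 * ρ ^ t := mul_comm _ _
      rw [← ENNReal.ofReal_toReal (measure_ne_top μ _)]
      exact ENNReal.ofReal_le_ofReal h1
    have hsummable : Summable (fun t : ℕ => (C0 / ε) * ρ ^ t) :=
      (summable_geometric_of_lt_one hρ0 hρ1).mul_left _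
    have htsum : (∑' t, μ {ω | ε ≤ V t ω}) ≠ ⊤ := by
      have hle := ENNReal.tsum_le_tsum hmeasbound
      have heq : (∑' t, ENNReal.ofReal ((C0/ε) * ρ ^ t))
          = ENNReal.ofReal (∑' t, (C0/ε) * ρ ^ t) :=
        (ENNReal.ofReal_tsum_of_nonneg
          (fun t => mul_nonneg (div_nonneg hC00 hε0.le) (pow_nonneg hρ0 t)) hsummable).symm
      rw [heq] at hle
      exact ne_top_of_le_ne_top ENNReal.ofReal_ne_top hle
    have hfreq := measure_setOf_frequently_eq_zero (μ := μ) (p := fun t ω => ε ≤ V t ω) htsum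
    have hae : ∀ᵐ ω ∂μ, ω ∉ {ω | ∃ᶠ t in atTop, ε ≤ V t ω} :=
      measure_eq_zero_iff_ae_notMem.mp hfreq
    filter_upwards [hae] with ω hω
    have hnot : ¬ ∃ᶠ t in atTop, ε ≤ V t ω := hω
    rw [Filter.not_frequently] at hnot
    exact hnot.mono fun t ht => not_le.mp ht
  have hVtend : ∀ᵐ ω ∂μ, Tendsto (fun t => V t ω) atTop (nhds 0) := by
    have hall := (MeasureTheory.ae_all_iff).mpr hBC
    filter_upwards [hall] with ω hω
    rw [Metric.tendsto_atTop]
    intro ε hε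
    obtain ⟨n, hn⟩ := exists_nat_one_div_lt hε
    have := hω n
    rw [Filter.eventually_atTop] at this
    obtain ⟨t0, ht0⟩ := this
    refine ⟨t0, fun t ht => ?_⟩
    rw [Real.dist_eq, sub_zero, abs_of_nonneg (hV_nonneg t ω)]
    exact lt_trans (ht0 t ht) hn
  -- conclusion
  filter_upwards [hVtend] with ω hω
  intro i k
  have h1 : ∀ t, (r t ω i k - abar k) ^ 2 ≤ V t ω := by
    intro t
    calc (r t ω i k - abar k) ^ 2 ≤ ∑ k', (r t ω i k' - abar k') ^ 2 :=
        Finset.single_le_sum (f := fun k' => (r t ω i k' - abar k') ^ 2)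
          (fun k' _ => sq_nonneg _) (Finset.mem_univ k)
      _ ≤ ∑ i', ∑ k', (r t ω i' k' - abar k') ^ 2 :=
        Finset.single_le_sum (f := fun i' => ∑ k', (r t ω i' k' - abar k') ^ 2)
          (fun i' _ => Finset.sum_nonneg fun k' _ => sq_nonneg _) (Finset.mem_univ i)
  have h2 : Tendsto (fun t => (r t ω i k - abar k) ^ 2) atTop (nhds 0) :=
    squeeze_zero (fun t => sq_nonneg _) h1 hω
  have h3 : Tendsto (fun t => |r t ω i k - abar k|) atTop (nhds 0) := by
    have hcomp := (Real.continuous_sqrt.tendsto 0).comp h2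
    have heq : (fun t => Real.sqrt ((r t ω i k - abar k) ^ 2))
        = fun t => |r t ω i k - abar k| := by
      funext t; rw [Real.sqrt_sq_eq_abs]
    rw [show Real.sqrt ∘ (fun t => (r t ω i k - abar k) ^ 2)
        = fun t => Real.sqrt ((r t ω i k - abar k) ^ 2) from rfl, heq] at hcomp
    simpa [Real.sqrt_zero] using hcomp
  have h4 : Tendsto (fun t => r t ω i k - abar k) atTop (nhds 0) := by
    refine tendsto_of_tendsto_of_tendsto_of_le_of_le (by simpa using h3.neg) h3
      (fun t => neg_abs_le _) (fun t => le_abs_self _)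
  have h5 : Tendsto (fun t => r t ω i k) atTop (nhds (abar k)) := by
    have := h4.add_const (abar k)
    simpa using this
  exact h5
end

section
/- In the setting of the common-privacy-degree dynamics — G a connected finite simple graph on {1, …, N} with maximum degree d_max, M ≥ 2·d_max − 1, γ ∈ (0, 1), distinct nonzero keys s_1, …, s_M, common degree p₀ ≤ M − 1, (c_t) mutually independent random proper edge colorings with uniform marginals ℙ(c_t(e) = k) = 1/M, channel Laplacians L^k(t), and each agent i updating r_i(t) ∈ ℝ^M by r̃_i^k(t+1) = r_i^k(t) + γ Σ_{j:{i,j}∈E} 1(c_t({i,j})=k)(r_j^k(t) − r_i^k(t)), r_i(t+1) = T̄_{p₀} r̃_i(t+1) — suppose each initial vector is generated by a polynomial: r_i^k(0) = f_i(s_k) where f_i(θ) = Σ_{ℓ=1}^{p₀} a_{iℓ} θ^ℓ + x_i(0), and define the state x_i(t) = Σ_{k=1}^M r_i^k(t) · ( Π_{ℓ≠k} (−s_ℓ) ) / ( Π_{ℓ≠k} (s_k − s_ℓ) ). Then, almost surely, for every i ∈ {1, …, N}, lim_{t→∞} x_i(t) = (1/N) Σ_{j=1}^N x_j(0); i.e.,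 average consensus is reached almost surely. -/
open Matrix MeasureTheory ProbabilityTheory Filter

namespace PPAC
open Matrix

variable {M p₀ : ℕ} {s : Fin M → ℝ}

lemma vand_mulVec_eq_zero (hs : Function.Injective s) (hp : p₀ + 1 ≤ M)
    {x : Fin (p₀+1) → ℝ} (hx : (vandMat M p₀ s).mulVec x = 0) : x = 0 := by
  have hv : Function.Injective (fun i : Fin (p₀+1) => s (Fin.castLE hp i)) :=
    fun i j hij => by
      have := hs hij
      exact Fin.castLE_injective hp this
  have hdet : (Matrix.vandermonde fun i : Fin (p₀+1) => s (Fin.castLE hp i)).det ≠ 0 :=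
    Matrix.det_vandermonde_ne_zero_iff.2 hv
  refine Matrix.eq_zero_of_mulVec_eq_zero hdet ?_
  funext i
  have := congrFun hx (Fin.castLE hp i)
  simpa [Matrix.vandermonde, Matrix.mulVec, dotProduct, vandMat] using this

lemma gram_det_isUnit (hs : Function.Injective s) (hp : p₀ + 1 ≤ M) :
    IsUnit ((vandMat M p₀ s)ᵀ * vandMat M p₀ s).det := by
  set Φ := vandMat M p₀ s
  rw [isUnit_iff_ne_zero]
  intro hdet
  obtain ⟨x, hx0, hx⟩ := (Matrix.exists_mulVec_eq_zero_iff).2 hdet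
  apply hx0
  refine vand_mulVec_eq_zero hs hp ?_
  have h1 : Φᵀ.mulVec (Φ.mulVec x) = 0 := by
    rw [Matrix.mulVec_mulVec]; exact hx
  have h2 : (Φ.mulVec x) ⬝ᵥ (Φ.mulVec x) = 0 := by
    have : x ⬝ᵥ (Φᵀ.mulVec (Φ.mulVec x)) = 0 := by rw [h1]; simp
    rwa [Matrix.dotProduct_mulVec, Matrix.vecMul_transpose, dotProduct_comm] at this
  funext k
  have hk : ∑ k, (Φ.mulVec x k)^2 = 0 := by
    simpa [dotProduct, pow_two] using h2
  have := (Finset.sum_eq_zero_iff_of_nonneg (fun k _ => sq_nonneg (Φ.mulVec x k))).1 hk k (Finset.mem_univ k)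
  simpa [pow_eq_zero_iff] using this

variable (hs : Function.Injective s) (hp : p₀ + 1 ≤ M)

lemma proj_mul_vand (hs : Function.Injective s) (hp : p₀ + 1 ≤ M) :
    projMat M p₀ s * vandMat M p₀ s = vandMat M p₀ s := by
  set Φ := vandMat M p₀ s
  have h := Matrix.nonsing_inv_mul _ (gram_det_isUnit hs hp)
  calc Φ * (Φᵀ * Φ)⁻¹ * Φᵀ * Φ = Φ * ((Φᵀ * Φ)⁻¹ * (Φᵀ * Φ)) := by
        simp only [Matrix.mul_assoc]
    _ = Φ := by rw [h, Matrix.mul_one]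

lemma proj_transpose (hs : Function.Injective s) (hp : p₀ + 1 ≤ M) :
    (projMat M p₀ s)ᵀ = projMat M p₀ s := by
  set Φ := vandMat M p₀ s
  have hsymm : (Φᵀ * Φ)ᵀ = Φᵀ * Φ := by
    rw [Matrix.transpose_mul, Matrix.transpose_transpose]
  show (Φ * (Φᵀ * Φ)⁻¹ * Φᵀ)ᵀ = Φ * (Φᵀ * Φ)⁻¹ * Φᵀ
  rw [Matrix.transpose_mul, Matrix.transpose_mul, Matrix.transpose_transpose,
    Matrix.transpose_nonsing_inv, hsymm, Matrix.mul_assoc]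

lemma proj_mul_proj (hs : Function.Injective s) (hp : p₀ + 1 ≤ M) :
    projMat M p₀ s * projMat M p₀ s = projMat M p₀ s := by
  set Φ := vandMat M p₀ s
  show (Φ * (Φᵀ * Φ)⁻¹ * Φᵀ) * (Φ * (Φᵀ * Φ)⁻¹ * Φᵀ) = Φ * (Φᵀ * Φ)⁻¹ * Φᵀ
  have h := Matrix.nonsing_inv_mul _ (gram_det_isUnit hs hp)
  calc (Φ * (Φᵀ * Φ)⁻¹ * Φᵀ) * (Φ * (Φᵀ * Φ)⁻¹ * Φᵀ)
      = Φ * (((Φᵀ * Φ)⁻¹ * (Φᵀ * Φ)) * ((Φᵀ * Φ)⁻¹ * Φᵀ)) := by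
        simp only [Matrix.mul_assoc]
    _ = Φ * (Φᵀ * Φ)⁻¹ * Φᵀ := by rw [h, Matrix.one_mul, Matrix.mul_assoc]

lemma proj_fix (hs : Function.Injective s) (hp : p₀ + 1 ≤ M) (y : Fin (p₀+1) → ℝ) :
    (projMat M p₀ s).mulVec ((vandMat M p₀ s).mulVec y) = (vandMat M p₀ s).mulVec y := by
  rw [Matrix.mulVec_mulVec, proj_mul_vand hs hp]

lemma proj_contract (hs : Function.Injective s) (hp : p₀ + 1 ≤ M) (v : Fin M → ℝ) :
    ∑ k, ((projMat M p₀ s).mulVec v k)^2 ≤ ∑ k, (v k)^2 := by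
  set P := projMat M p₀ s
  set u := P.mulVec v
  have hPtP : Pᵀ * P = P := by
    rw [proj_transpose hs hp, proj_mul_proj hs hp]
  have hc : u ⬝ᵥ u = v ⬝ᵥ u := by
    show (P.mulVec v) ⬝ᵥ (P.mulVec v) = v ⬝ᵥ (P.mulVec v)
    rw [Matrix.dotProduct_mulVec (P.mulVec v) P v, ← Matrix.mulVec_transpose,
      Matrix.mulVec_mulVec, hPtP, dotProduct_comm]
  have hnn : (0:ℝ) ≤ u ⬝ᵥ u := by
    simp only [dotProduct]
    exact Finset.sum_nonneg (fun k _ => mul_self_nonneg _)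
  have hcs : (v ⬝ᵥ u)^2 ≤ (∑ k, (v k)^2) * (∑ k, (u k)^2) := by
    simpa [dotProduct, pow_two] using
      Finset.sum_mul_sq_le_sq_mul_sq Finset.univ v u
  have huu : u ⬝ᵥ u = ∑ k, (u k)^2 := by simp [dotProduct, pow_two]
  rcases eq_or_lt_of_le hnn with h0 | hpos
  · rw [← huu, ← h0]
    exact Finset.sum_nonneg (fun k _ => sq_nonneg _)
  · have : (u ⬝ᵥ u)^2 ≤ (∑ k, (v k)^2) * (u ⬝ᵥ u) := by
      rw [hc] at hpos ⊢
      calc (v ⬝ᵥ u)^2 ≤ (∑ k, (v k)^2) * (∑ k, (u k)^2) := hcs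
        _ = (∑ k, (v k)^2) * (v ⬝ᵥ u) := by rw [← huu, hc]
    have : u ⬝ᵥ u ≤ ∑ k, (v k)^2 := by
      have h2 : (u ⬝ᵥ u) * (u ⬝ᵥ u) ≤ (∑ k, (v k)^2) * (u ⬝ᵥ u) := by
        simpa [pow_two] using this
      exact le_of_mul_le_mul_right h2 hpos
    rw [← huu]; exact this



noncomputable def lagW {M : ℕ} (s : Fin M → ℝ) (k : Fin M) : ℝ :=
  (∏ ℓ ∈ Finset.univ.erase k, (-(s ℓ))) / (∏ ℓ ∈ Finset.univ.erase k, (s k - s ℓ))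

lemma lagrange_eval_zero {M : ℕ} {s : Fin M → ℝ} (hs : Function.Injective s)
    (f : Polynomial ℝ) (hf : f.degree < M) :
    ∑ k, f.eval (s k) * lagW s k = f.eval 0 := by
  classical
  have hinj : Set.InjOn s (Finset.univ : Finset (Fin M)) := fun x _ y _ h => hs h
  have hdeg : f.degree < (Finset.univ : Finset (Fin M)).card := by
    simpa using hf
  have hrep := Lagrange.eq_interpolate hinj hdeg
  conv_rhs => rw [hrep]
  rw [Lagrange.interpolate_apply, Polynomial.eval_finset_sum]
  refine Finset.sum_congr rfl (fun k _ => ?_)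
  rw [Polynomial.eval_mul, Polynomial.eval_C]
  congr 1
  -- eval 0 of basis = lagW
  rw [Lagrange.basis, Polynomial.eval_prod]
  unfold lagW
  rw [← Finset.prod_div_distrib]
  refine Finset.prod_congr rfl (fun ℓ hℓ => ?_)
  have hne : s k - s ℓ ≠ 0 := by
    have : k ≠ ℓ := (Finset.mem_erase.1 hℓ).1.symm
    exact sub_ne_zero.2 (fun h => this (hs h))
  rw [Lagrange.basisDivisor, Polynomial.eval_mul, Polynomial.eval_C,
    Polynomial.eval_sub, Polynomial.eval_X, Polynomial.eval_C]
  field_simp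
  ring


lemma const_of_connected {N : ℕ} {G : SimpleGraph (Fin N)} (hG : G.Connected)
    {v : Fin N → ℝ} (h : ∀ i j, G.Adj i j → v i = v j) (i j : Fin N) : v i = v j := by
  obtain ⟨w⟩ := hG.preconnected i j
  induction w with
  | nil => rfl
  | cons hadj p ih => exact (h _ _ hadj).trans ih

lemma poincare {N : ℕ} (G : SimpleGraph (Fin N)) [DecidableRel G.Adj] (hG : G.Connected) :
    ∃ ε : ℝ, 0 < ε ∧ ∀ v : Fin N → ℝ, (∑ i, v i = 0) →
      ε * ∑ i, (v i)^2 ≤ ∑ i, ∑ j ∈ G.neighborFinset i, (v i - v j)^2 := by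
  classical
  set Q : (Fin N → ℝ) → ℝ := fun v => ∑ i, ∑ j ∈ G.neighborFinset i, (v i - v j)^2 with hQ
  have hQcont : Continuous Q := by
    apply continuous_finset_sum
    intro i _
    apply continuous_finset_sum
    intro j _
    exact ((continuous_apply i).sub (continuous_apply j)).pow 2
  have hQnonneg : ∀ v, 0 ≤ Q v := fun v =>
    Finset.sum_nonneg fun i _ => Finset.sum_nonneg fun j _ => sq_nonneg _
  set S : Set (Fin N → ℝ) := {v | (∑ i, (v i)^2) = 1 ∧ (∑ i, v i) = 0} with hS
  by_cases hSne : S.Nonempty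
  · -- compactness
    have hclosed : IsClosed S := by
      have h1 : Continuous (fun v : Fin N → ℝ => ∑ i, (v i)^2) := by
        apply continuous_finset_sum; intro i _; exact (continuous_apply i).pow 2
      have h2 : Continuous (fun v : Fin N → ℝ => ∑ i, v i) := by
        apply continuous_finset_sum; intro i _; exact continuous_apply i
      exact (isClosed_eq h1 continuous_const).inter (isClosed_eq h2 continuous_const)
    have hbdd : Bornology.IsBounded S := by
      apply Bornology.IsBounded.subset (Metric.isBounded_closedBall (x := (0 : Fin N → ℝ)) (r := 1))
      intro v hv
      simp only [Metric.mem_closedBall, dist_zero_right]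
      rw [pi_norm_le_iff_of_nonneg (by norm_num)]
      intro i
      have : (v i)^2 ≤ 1 := by
        rw [← hv.1]
        exact Finset.single_le_sum (fun j _ => sq_nonneg (v j)) (Finset.mem_univ i)
      rw [Real.norm_eq_abs]
      nlinarith [abs_nonneg (v i), sq_abs (v i)]
    have hcomp : IsCompact S := Metric.isCompact_of_isClosed_isBounded hclosed hbdd
    obtain ⟨v₀, hv₀S, hv₀min⟩ := hcomp.exists_isMinOn hSne hQcont.continuousOn
    refine ⟨Q v₀, ?_, ?_⟩
    · rcases lt_or_eq_of_le (hQnonneg v₀) with h | h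
      · exact h
      · exfalso
        -- Q v₀ = 0 ⇒ v₀ constant along edges ⇒ constant ⇒ 0, contradicting norm 1
        have hzero : ∀ i, ∀ j ∈ G.neighborFinset i, (v₀ i - v₀ j)^2 = 0 := by
          intro i j hj
          have h1 : ∑ i, ∑ j ∈ G.neighborFinset i, (v₀ i - v₀ j)^2 = 0 := h.symm
          have h2 := (Finset.sum_eq_zero_iff_of_nonneg
            (fun i _ => Finset.sum_nonneg fun j _ => sq_nonneg (v₀ i - v₀ j))).1 h1 i (Finset.mem_univ i)
          exact (Finset.sum_eq_zero_iff_of_nonneg (fun j _ => sq_nonneg _)).1 h2 j hj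
        have hadj : ∀ i j, G.Adj i j → v₀ i = v₀ j := by
          intro i j hij
          have := hzero i j (G.mem_neighborFinset i j |>.2 hij)
          have := sub_eq_zero.1 (by exact pow_eq_zero_iff (n := 2) (by norm_num) |>.1 this)
          linarith [this]
        have hconst := const_of_connected hG hadj
        have hNpos : 0 < N := by
          rcases hG.nonempty with ⟨i⟩
          exact i.pos
        obtain ⟨i0⟩ : Nonempty (Fin N) := ⟨⟨0, hNpos⟩⟩
        have hsum : ∑ i, v₀ i = (N : ℝ) * v₀ i0 := by
          rw [Finset.sum_congr rfl (fun i _ => hconst i i0)]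
          simp [Finset.card_univ, mul_comm]
        have : v₀ i0 = 0 := by
          have hN : (N : ℝ) ≠ 0 := Nat.cast_ne_zero.2 hNpos.ne'
          have := hv₀S.2
          rw [hsum] at this
          exact (mul_eq_zero.1 this).resolve_left hN
        have hall : ∀ i, v₀ i = 0 := fun i => (hconst i i0).trans this
        have h1 := hv₀S.1
        rw [Finset.sum_congr rfl (fun i _ => by rw [hall i]; ring : ∀ i ∈ Finset.univ, v₀ i ^ 2 = 0)] at h1
        simp at h1
    · intro v hv
      by_cases hv0 : ∀ i, v i = 0
      · have : ∑ i, (v i)^2 = 0 := Finset.sum_eq_zero (fun i _ => by rw [hv0 i]; ring)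
        rw [this, mul_zero]
        exact hQnonneg v
      · push_neg at hv0
        obtain ⟨i₁, hi₁⟩ := hv0
        have hn2pos : 0 < ∑ i, (v i)^2 := by
          apply Finset.sum_pos' (fun i _ => sq_nonneg _)
          exact ⟨i₁, Finset.mem_univ i₁, by positivity⟩
        set n : ℝ := Real.sqrt (∑ i, (v i)^2) with hn
        have hnpos : 0 < n := Real.sqrt_pos.2 hn2pos
        have hnsq : n^2 = ∑ i, (v i)^2 := Real.sq_sqrt hn2pos.le
        set u : Fin N → ℝ := fun i => n⁻¹ * v i with hu
        have huS : u ∈ S := by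
          constructor
          · have : ∑ i, (u i)^2 = n⁻¹^2 * ∑ i, (v i)^2 := by
              rw [Finset.mul_sum]; exact Finset.sum_congr rfl (fun i _ => by ring)
            rw [this, ← hnsq]
            field_simp
          · have : ∑ i, u i = n⁻¹ * ∑ i, v i := by
              rw [Finset.mul_sum]
            rw [this, hv, mul_zero]
        have hQu : Q u = n⁻¹^2 * Q v := by
          simp only [hQ, hu, Finset.mul_sum]
          refine Finset.sum_congr rfl (fun i _ => Finset.sum_congr rfl (fun j _ => by ring))
        have := hv₀min huS
        simp only [Set.mem_setOf_eq] at this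
        have hle : Q v₀ ≤ n⁻¹^2 * Q v := by rw [← hQu]; exact this
        have : Q v₀ * n^2 ≤ Q v := by
          calc Q v₀ * n^2 ≤ (n⁻¹^2 * Q v) * n^2 := by
                apply mul_le_mul_of_nonneg_right hle (sq_nonneg n)
            _ = Q v := by field_simp
        rw [← hnsq]
        exact this
  · -- S empty: every mean-zero vector is zero
    refine ⟨1, one_pos, fun v hv => ?_⟩
    by_cases hv0 : ∀ i, v i = 0
    · have : ∑ i, (v i)^2 = 0 := Finset.sum_eq_zero (fun i _ => by rw [hv0 i]; ring)
      rw [this, mul_zero]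
      exact Finset.sum_nonneg fun i _ => Finset.sum_nonneg fun j _ => sq_nonneg _
    · exfalso
      push_neg at hv0
      obtain ⟨i₁, hi₁⟩ := hv0
      have hn2pos : 0 < ∑ i, (v i)^2 := by
        apply Finset.sum_pos' (fun i _ => sq_nonneg _)
        exact ⟨i₁, Finset.mem_univ i₁, by positivity⟩
      set n : ℝ := Real.sqrt (∑ i, (v i)^2) with hn
      have hnpos : 0 < n := Real.sqrt_pos.2 hn2pos
      have hnsq : n^2 = ∑ i, (v i)^2 := Real.sq_sqrt hn2pos.le
      apply hSne
      refine ⟨fun i => n⁻¹ * v i, ?_, ?_⟩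
      · have : ∑ i, (n⁻¹ * v i)^2 = n⁻¹^2 * ∑ i, (v i)^2 := by
          rw [Finset.mul_sum]; exact Finset.sum_congr rfl (fun i _ => by ring)
        rw [this, ← hnsq]
        field_simp
      · rw [← Finset.mul_sum, hv, mul_zero]


lemma involution_sum_sq {n : ℕ} (m : Fin n → Fin n) (hm : Function.Involutive m)
    (f : Fin n → ℝ) : ∑ i, f (m i) = ∑ i, f i :=
  Fintype.sum_equiv hm.toPerm (fun i => f (m i)) f (fun i => rfl)

lemma involution_step_identity {n : ℕ} (m : Fin n → Fin n) (hm : Function.Involutive m)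
    (u : Fin n → ℝ) (γ : ℝ) :
    ∑ i, ((1-γ)*u i + γ*u (m i))^2
      = ∑ i, (u i)^2 - γ*(1-γ) * ∑ i, (u i - u (m i))^2 := by
  have key : ∀ i, ((1-γ)*u i + γ*u (m i))^2
      = (u i)^2 - γ*(1-γ)*(u i - u (m i))^2 + γ*((u (m i))^2 - (u i)^2) := by
    intro i; ring
  rw [Finset.sum_congr rfl (fun i _ => key i)]
  rw [Finset.sum_add_distrib, Finset.sum_sub_distrib]
  have h1 : ∑ i, γ*((u (m i))^2 - (u i)^2) = 0 := by
    rw [← Finset.mul_sum, Finset.sum_sub_distrib]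
    rw [involution_sum_sq m hm (fun i => (u i)^2)]
    ring
  rw [h1, ← Finset.mul_sum]
  ring

variable {N M : ℕ} (G : SimpleGraph (Fin N)) [DecidableRel G.Adj]
  (col : Sym2 (Fin N) → Fin M)

/-- The color-`k` matching partner of vertex `i` (itself if unmatched). -/
noncomputable def mFun (k : Fin M) (i : Fin N) : Fin N :=
  if h : ∃ j, j ∈ G.neighborFinset i ∧ col s(i, j) = k then h.choose else i

variable {G} {col}

/-- properness at a vertex: at most one incident edge of each color. -/
def ProperAt (G : SimpleGraph (Fin N)) (col : Sym2 (Fin N) → Fin M) : Prop :=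
  ∀ i j j' : Fin N, G.Adj i j → G.Adj i j' → col s(i,j) = col s(i,j') → j = j'

lemma properAt_of_proper
    (hproper : ∀ e ∈ G.edgeSet, ∀ e' ∈ G.edgeSet, e ≠ e' →
      (∃ v : Fin N, v ∈ e ∧ v ∈ e') → col e ≠ col e') :
    ProperAt G col := by
  intro i j j' hij hij' hcol
  by_contra hne
  refine hproper s(i,j) (G.mem_edgeSet.2 hij) s(i,j') (G.mem_edgeSet.2 hij') ?_ ?_ hcol
  · intro heq
    rw [Sym2.eq_iff] at heq
    rcases heq with ⟨h1, h2⟩ | ⟨h1, h2⟩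
    · exact hne h2
    · exact G.irrefl (show G.Adj i i from by rw [← h1] at hij'; exact hij')
  · exact ⟨i, Sym2.mem_mk_left i j, Sym2.mem_mk_left i j'⟩

lemma mFun_eq (hp : ProperAt G col) {k : Fin M} {i j : Fin N}
    (hij : G.Adj i j) (hcol : col s(i,j) = k) : mFun G col k i = j := by
  have hex : ∃ j, j ∈ G.neighborFinset i ∧ col s(i, j) = k :=
    ⟨j, (G.mem_neighborFinset i j).2 hij, hcol⟩
  rw [mFun, dif_pos hex]
  obtain ⟨hmem, hcol'⟩ := hex.choose_spec
  exact hp i _ j ((G.mem_neighborFinset i _).1 hmem) hij (hcol'.trans hcol.symm)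

lemma mFun_eq_self (hp : ProperAt G col) {k : Fin M} {i : Fin N}
    (h : ∀ j, G.Adj i j → col s(i,j) ≠ k) : mFun G col k i = i := by
  rw [mFun, dif_neg]
  rintro ⟨j, hmem, hcol⟩
  exact h j ((G.mem_neighborFinset i j).1 hmem) hcol

lemma mFun_cases (hp : ProperAt G col) (k : Fin M) (i : Fin N) :
    (mFun G col k i = i ∧ ∀ j, G.Adj i j → col s(i,j) ≠ k)
    ∨ (G.Adj i (mFun G col k i) ∧ col s(i, mFun G col k i) = k) := by
  by_cases hex : ∃ j, j ∈ G.neighborFinset i ∧ col s(i, j) = k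
  · right
    obtain ⟨j, hmem, hcol⟩ := hex
    have := mFun_eq hp ((G.mem_neighborFinset i j).1 hmem) hcol
    rw [this]
    exact ⟨(G.mem_neighborFinset i j).1 hmem, hcol⟩
  · left
    push_neg at hex
    constructor
    · exact mFun_eq_self hp (fun j hadj hcol => (hex j ((G.mem_neighborFinset i j).2 hadj)) hcol)
    · exact fun j hadj hcol => (hex j ((G.mem_neighborFinset i j).2 hadj)) hcol

lemma mFun_involutive (hp : ProperAt G col) (k : Fin M) :
    Function.Involutive (mFun G col k) := by
  intro i
  rcases mFun_cases hp k i with ⟨h1, _⟩ | ⟨hadj, hcol⟩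
  · rw [h1, h1]
  · set j := mFun G col k i
    have hji : G.Adj j i := hadj.symm
    have hcol' : col s(j,i) = k := by rwa [Sym2.eq_swap] at hcol
    exact mFun_eq hp hji hcol'

/-- The neighbor sum collapses to the matched partner. -/
lemma neighbor_sum_eq (hp : ProperAt G col) (k : Fin M) (i : Fin N) (g : Fin N → ℝ) :
    ∑ j ∈ G.neighborFinset i, (if col s(i, j) = k then (1:ℝ) else 0) * g j
      = (if mFun G col k i = i then 0 else g (mFun G col k i)) := by
  rcases mFun_cases hp k i with ⟨h1, h2⟩ | ⟨hadj, hcol⟩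
  · rw [if_pos h1]
    apply Finset.sum_eq_zero
    intro j hj
    rw [if_neg (h2 j ((G.mem_neighborFinset i j).1 hj)), zero_mul]
  · set j₀ := mFun G col k i with hj₀
    have hne : j₀ ≠ i := fun h => G.irrefl (h ▸ hadj)
    rw [if_neg hne]
    rw [Finset.sum_eq_single_of_mem j₀ ((G.mem_neighborFinset i j₀).2 hadj)]
    · rw [if_pos hcol, one_mul]
    · intro j hj hjne
      rw [if_neg, zero_mul]
      intro hcolj
      exact hjne (hp i j j₀ ((G.mem_neighborFinset i j).1 hj) hadj (hcolj.trans hcol.symm))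

lemma neighbor_sum_eq' (hp : ProperAt G col) (k : Fin M) (i : Fin N) (g : Fin N → ℝ)
    (hg : g i = 0) :
    ∑ j ∈ G.neighborFinset i, (if col s(i, j) = k then (1:ℝ) else 0) * g j
      = g (mFun G col k i) := by
  rw [neighbor_sum_eq hp k i g]
  split
  · next h => rw [h, hg]
  · rfl

lemma inner_step_eq (hp : ProperAt G col) (γ : ℝ) (q : Fin N → Fin M → ℝ) (i : Fin N) (k : Fin M) :
    q i k + γ * ∑ j ∈ G.neighborFinset i, (if col s(i,j) = k then (1:ℝ) else 0) * (q j k - q i k)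
      = (1-γ) * q i k + γ * q (mFun G col k i) k := by
  rw [neighbor_sum_eq' hp k i (fun j => q j k - q i k) (by ring)]
  ring

lemma step_sum_invariant (hp : ProperAt G col) (γ : ℝ) (q : Fin N → Fin M → ℝ) (k : Fin M) :
    ∑ i, (q i k + γ * ∑ j ∈ G.neighborFinset i, (if col s(i,j) = k then (1:ℝ) else 0) * (q j k - q i k))
      = ∑ i, q i k := by
  rw [Finset.sum_congr rfl (fun i _ => inner_step_eq hp γ q i k)]
  rw [Finset.sum_add_distrib, ← Finset.mul_sum, ← Finset.mul_sum]
  rw [involution_sum_sq (mFun G col k) (mFun_involutive hp k) (fun j => q j k)]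
  ring

lemma dirichlet_match (hp : ProperAt G col) (q : Fin N → Fin M → ℝ) (i : Fin N) (k : Fin M) :
    ∑ j ∈ G.neighborFinset i, (if col s(i,j) = k then (1:ℝ) else 0) * (q i k - q j k)^2
      = (q i k - q (mFun G col k i) k)^2 := by
  rw [neighbor_sum_eq' hp k i (fun j => (q i k - q j k)^2) (by ring)]

variable {p₀ : ℕ} {s : Fin M → ℝ}

lemma step_decrease (hs : Function.Injective s) (hpM : p₀ + 1 ≤ M)
    (hp : ProperAt G col) (γ : ℝ)
    (q q' : Fin N → Fin M → ℝ) (rb : Fin M → ℝ)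
    (hrb : (projMat M p₀ s).mulVec rb = rb)
    (hq' : ∀ i, q' i = (projMat M p₀ s).mulVec
        (fun k => q i k + γ * ∑ j ∈ G.neighborFinset i,
          (if col s(i,j) = k then (1:ℝ) else 0) * (q j k - q i k))) :
    ∑ i, ∑ k, (q' i k - rb k)^2
      ≤ (∑ i, ∑ k, (q i k - rb k)^2)
        - γ*(1-γ) * ∑ k, ∑ i, ∑ j ∈ G.neighborFinset i,
            (if col s(i,j) = k then (1:ℝ) else 0) * (q i k - q j k)^2 := by
  set P := projMat M p₀ s with hP
  set w : Fin N → Fin M → ℝ := fun i k => q i k + γ * ∑ j ∈ G.neighborFinset i,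
    (if col s(i,j) = k then (1:ℝ) else 0) * (q j k - q i k) with hw
  have h2 : ∀ i, ∑ k, (q' i k - rb k)^2 ≤ ∑ k, (w i k - rb k)^2 := by
    intro i
    have hqi : ∀ k, q' i k - rb k = P.mulVec (fun k' => w i k' - rb k') k := by
      intro k
      rw [hq' i]
      have : P.mulVec (fun k' => w i k' - rb k') = P.mulVec (w i) - P.mulVec rb :=
        Matrix.mulVec_sub P (w i) rb
      rw [this, hrb]
      rfl
    rw [Finset.sum_congr rfl (fun k _ => by rw [hqi k])]
    exact proj_contract hs hpM _
  calc ∑ i, ∑ k, (q' i k - rb k)^2 ≤ ∑ i, ∑ k, (w i k - rb k)^2 :=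
        Finset.sum_le_sum (fun i _ => h2 i)
    _ = ∑ k, ∑ i, (w i k - rb k)^2 := Finset.sum_comm
    _ = ∑ k, ((∑ i, (q i k - rb k)^2)
          - γ*(1-γ) * ∑ i, ((q i k - rb k) - (q (mFun G col k i) k - rb k))^2) := by
        refine Finset.sum_congr rfl (fun k _ => ?_)
        have : ∀ i, w i k - rb k
            = (1-γ)*(q i k - rb k) + γ*(q (mFun G col k i) k - rb k) := by
          intro i
          rw [hw]
          simp only
          rw [inner_step_eq hp γ q i k]
          ring
        rw [Finset.sum_congr rfl (fun i _ => by rw [this i])]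
        exact involution_step_identity (mFun G col k) (mFun_involutive hp k)
          (fun i => q i k - rb k) γ
    _ = (∑ i, ∑ k, (q i k - rb k)^2)
        - γ*(1-γ) * ∑ k, ∑ i, ∑ j ∈ G.neighborFinset i,
            (if col s(i,j) = k then (1:ℝ) else 0) * (q i k - q j k)^2 := by
        rw [Finset.sum_sub_distrib]
        congr 1
        · exact Finset.sum_comm
        · rw [Finset.mul_sum]
          refine Finset.sum_congr rfl (fun k _ => ?_)
          congr 1
          refine Finset.sum_congr rfl (fun i _ => ?_)
          rw [dirichlet_match hp q i k]
          ring_nf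


section Prob
variable {N M : ℕ} {Ω : Type*} [MeasurableSpace Ω] {μ : Measure Ω} [IsProbabilityMeasure μ]
variable {c : ℕ → Ω → Sym2 (Fin N) → Fin M}

lemma hist_measurable (hc : ∀ t, Measurable (c t)) (t : ℕ) :
    Measurable (fun ω => (fun i : Fin t => c i ω)) :=
  measurable_pi_lambda _ (fun i => hc i)

lemma factor_measurable (hc : ∀ t, Measurable (c t)) (t : ℕ)
    (Θ : (Fin t → Sym2 (Fin N) → Fin M) → ℝ) :
    Measurable (fun ω => Θ (fun i : Fin t => c i ω)) :=
  (measurable_of_countable Θ).comp (hist_measurable hc t)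

lemma factor_integrable (hM : 0 < M) (hc : ∀ t, Measurable (c t)) (t : ℕ)
    (Θ : (Fin t → Sym2 (Fin N) → Fin M) → ℝ) :
    Integrable (fun ω => Θ (fun i : Fin t => c i ω)) μ := by
  have : Nonempty (Fin M) := ⟨⟨0, hM⟩⟩
  obtain ⟨v₀, hv₀⟩ := Finite.exists_max (fun v => |Θ v|)
  refine Integrable.mono' (integrable_const (|Θ v₀|))
    (factor_measurable hc t Θ).aestronglyMeasurable ?_
  exact Filter.Eventually.of_forall (fun ω => hv₀ _)

lemma indicator_eq (t : ℕ) (e : Sym2 (Fin N)) (k : Fin M) :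
    (fun ω => if c t ω e = k then (1:ℝ) else 0)
      = Set.indicator {ω | c t ω e = k} (fun _ => (1:ℝ)) := by
  funext ω
  rw [Set.indicator_apply]
  simp [Set.mem_setOf_eq]

lemma indicator_measurableSet (hc : ∀ t, Measurable (c t)) (t : ℕ) (e : Sym2 (Fin N)) (k : Fin M) :
    MeasurableSet {ω | c t ω e = k} := by
  have h1 : Measurable (fun ω => c t ω e) := (measurable_pi_apply e).comp (hc t)
  exact h1 (MeasurableSet.singleton k)

lemma integral_indicator_eq (hc : ∀ t, Measurable (c t)) (t : ℕ) (e : Sym2 (Fin N)) (k : Fin M) :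
    ∫ ω, (if c t ω e = k then (1:ℝ) else 0) ∂μ = (μ {ω | c t ω e = k}).toReal := by
  rw [indicator_eq t e k, integral_indicator_const (1:ℝ) (indicator_measurableSet hc t e k)]
  simp [measureReal_def]

lemma key_integral (hM : 0 < M) (hc_meas : ∀ t, Measurable (c t))
    (hc_indep : iIndepFun c μ) (t : ℕ)
    (Θ : (Fin t → Sym2 (Fin N) → Fin M) → ℝ) (e : Sym2 (Fin N)) (k : Fin M) :
    ∫ ω, (if c t ω e = k then (1:ℝ) else 0) * Θ (fun i : Fin t => c i ω) ∂μ
      = (μ {ω | c t ω e = k}).toReal * ∫ ω, Θ (fun i : Fin t => c i ω) ∂μ := by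
  have : Nonempty (Fin M) := ⟨⟨0, hM⟩⟩
  classical
  set ψ : ((i : ({t} : Finset ℕ)) → Sym2 (Fin N) → Fin M) → ℝ :=
    fun v => if v ⟨t, Finset.mem_singleton_self t⟩ e = k then 1 else 0 with hψ
  set φ : ((i : (Finset.range t : Finset ℕ)) → Sym2 (Fin N) → Fin M) → ℝ :=
    fun v => Θ (fun i : Fin t => v ⟨(i : ℕ), Finset.mem_range.mpr i.2⟩) with hφ
  have hdisj : Disjoint ({t} : Finset ℕ) (Finset.range t) := by
    rw [Finset.disjoint_singleton_left]
    simp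
  have hIF := hc_indep.indepFun_finset ({t} : Finset ℕ) (Finset.range t) hdisj hc_meas
  have hIndep : IndepFun
      (ψ ∘ (fun ω (i : ({t} : Finset ℕ)) => c i ω))
      (φ ∘ (fun ω (i : (Finset.range t : Finset ℕ)) => c i ω)) μ :=
    hIF.comp (measurable_of_countable ψ) (measurable_of_countable φ)
  have heq1 : (ψ ∘ (fun ω (i : ({t} : Finset ℕ)) => c i ω))
      = fun ω => if c t ω e = k then (1:ℝ) else 0 := rfl
  have heq2 : (φ ∘ (fun ω (i : (Finset.range t : Finset ℕ)) => c i ω))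
      = fun ω => Θ (fun i : Fin t => c i ω) := rfl
  rw [heq1, heq2] at hIndep
  have hInt1 : Integrable (fun ω => if c t ω e = k then (1:ℝ) else 0) μ := by
    refine Integrable.mono' (integrable_const (1:ℝ)) ?_ ?_
    · exact (Measurable.ite (indicator_measurableSet hc_meas t e k)
        measurable_const measurable_const).aestronglyMeasurable
    · refine Filter.Eventually.of_forall (fun ω => ?_)
      split <;> simp
  have hInt2 : Integrable (fun ω => Θ (fun i : Fin t => c i ω)) μ :=
    factor_integrable hM hc_meas t Θ
  have := hIndep.integral_mul_eq_mul_integral hInt1.aestronglyMeasurable hInt2.aestronglyMeasurable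
  have hmul : (fun ω => if c t ω e = k then (1:ℝ) else 0) * (fun ω => Θ (fun i : Fin t => c i ω))
      = fun ω => (if c t ω e = k then (1:ℝ) else 0) * Θ (fun i : Fin t => c i ω) := rfl
  rw [hmul] at this
  rw [this, integral_indicator_eq hc_meas t e k]

end Prob

lemma poly_lagrange {M p₀ : ℕ} {s : Fin M → ℝ} (hs : Function.Injective s) (hpM : p₀ < M)
    (b : Fin p₀ → ℝ) (x : ℝ) :
    ∑ k, ((∑ ℓ : Fin p₀, b ℓ * s k ^ ((ℓ:ℕ)+1)) + x) * lagW s k = x := by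
  classical
  set f : Polynomial ℝ :=
    (∑ ℓ : Fin p₀, Polynomial.C (b ℓ) * Polynomial.X^((ℓ:ℕ)+1)) + Polynomial.C x with hf
  have hevals : ∀ k, f.eval (s k) = (∑ ℓ : Fin p₀, b ℓ * s k ^ ((ℓ:ℕ)+1)) + x := by
    intro k
    simp [hf, Polynomial.eval_finset_sum]
  have heval0 : f.eval 0 = x := by
    rw [hf, Polynomial.eval_add, Polynomial.eval_C, Polynomial.eval_finset_sum,
      Finset.sum_eq_zero, zero_add]
    intro ℓ _
    simp
  have hdeg : f.degree < (M : ℕ) := by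
    have h1 : f.degree ≤ (p₀ : ℕ) := by
      apply (Polynomial.degree_add_le _ _).trans
      apply max_le
      · apply (Polynomial.degree_sum_le _ _).trans
        apply Finset.sup_le
        intro ℓ _
        apply (Polynomial.degree_C_mul_X_pow_le _ _).trans
        exact_mod_cast Nat.cast_le.2 ℓ.2
      · exact Polynomial.degree_C_le.trans (by exact_mod_cast Nat.zero_le p₀)
    exact lt_of_le_of_lt h1 (by exact_mod_cast hpM)
  have hz := lagrange_eval_zero hs f hdeg
  conv_rhs => rw [← heval0, ← hz]
  exact Finset.sum_congr rfl (fun k _ => by rw [hevals k])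

lemma rb_lagrange {M p₀ N : ℕ} {s : Fin M → ℝ} (hs : Function.Injective s) (hpM : p₀ < M)
    (a : Fin N → Fin p₀ → ℝ) (x0 : Fin N → ℝ) :
    ∑ k, ((N:ℝ)⁻¹ * ∑ j, ((∑ ℓ : Fin p₀, a j ℓ * s k ^ ((ℓ:ℕ)+1)) + x0 j)) * lagW s k
      = (N:ℝ)⁻¹ * ∑ j, x0 j := by
  have h1 : ∀ k ∈ Finset.univ,
      ((N:ℝ)⁻¹ * ∑ j, ((∑ ℓ : Fin p₀, a j ℓ * s k ^ ((ℓ:ℕ)+1)) + x0 j)) * lagW s k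
      = (N:ℝ)⁻¹ * ∑ j, (((∑ ℓ : Fin p₀, a j ℓ * s k ^ ((ℓ:ℕ)+1)) + x0 j) * lagW s k) := by
    intro k _
    rw [mul_assoc, Finset.sum_mul]
  rw [Finset.sum_congr rfl h1, ← Finset.mul_sum, Finset.sum_comm]
  congr 1
  exact Finset.sum_congr rfl (fun j _ => poly_lagrange hs hpM (a j) (x0 j))

end PPAC

/-- **Theorem 1: privacy-preserving average consensus, common degree.**
In the common-privacy-degree dynamics, if the initial encoded states are generated by the
encoding polynomials `f_i(θ) = Σ_{ℓ=1}^{p₀} a_{iℓ} θ^ℓ + x_i(0)` via `r_i^k(0) = f_i(s_k)`,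
and the state is reconstructed by the Lagrange formula
`x_i(t) = Σ_k r_i^k(t) (Π_{ℓ≠k} (−s_ℓ)) / (Π_{ℓ≠k} (s_k − s_ℓ))`, then, almost surely,
`x_i(t) → (1/N) Σ_j x_j(0)` for every agent `i`: average consensus is reached. -/
theorem privacy_preserving_average_consensus
    {N : ℕ} (G : SimpleGraph (Fin N)) [DecidableRel G.Adj] (hG : G.Connected)
    (M : ℕ) (hM : 2 * G.maxDegree ≤ M + 1)
    (γ : ℝ) (hγ : γ ∈ Set.Ioo (0 : ℝ) 1)
    (s : Fin M → ℝ) (hs_inj : Function.Injective s) (hs_ne : ∀ k, s k ≠ 0)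
    (p₀ : ℕ) (hp₀ : p₀ + 1 ≤ M)
    {Ω : Type*} [MeasurableSpace Ω] (μ : Measure Ω) [IsProbabilityMeasure μ]
    (c : ℕ → Ω → Sym2 (Fin N) → Fin M)
    (hc_meas : ∀ t, Measurable (c t))
    (hc_indep : iIndepFun c μ)
    (hc_proper : ∀ t, ∀ᵐ ω ∂μ, ∀ e ∈ G.edgeSet, ∀ e' ∈ G.edgeSet, e ≠ e' →
      (∃ v : Fin N, v ∈ e ∧ v ∈ e') → c t ω e ≠ c t ω e')
    (hc_unif : ∀ t, ∀ e ∈ G.edgeSet, ∀ k : Fin M,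
      μ {ω | c t ω e = k} = 1 / (M : ENNReal))
    (a : Fin N → Fin p₀ → ℝ) (x0 : Fin N → ℝ)
    (r : ℕ → Ω → Fin N → Fin M → ℝ)
    (hr_init : ∀ (ω : Ω) (i : Fin N) (k : Fin M),
      r 0 ω i k = (∑ ℓ : Fin p₀, a i ℓ * s k ^ ((ℓ : ℕ) + 1)) + x0 i)
    (hr_upd : ∀ (t : ℕ) (ω : Ω) (i : Fin N),
      r (t + 1) ω i = (projMat M p₀ s).mulVec
        (fun k => r t ω i k + γ * ∑ j ∈ G.neighborFinset i,
          (if c t ω s(i, j) = k then (1 : ℝ) else 0) * (r t ω j k - r t ω i k))) :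
    ∀ᵐ ω ∂μ, ∀ i : Fin N,
      Tendsto (fun t => ∑ k : Fin M, r t ω i k *
          ((∏ ℓ ∈ Finset.univ.erase k, (-(s ℓ))) /
            (∏ ℓ ∈ Finset.univ.erase k, (s k - s ℓ))))
        atTop (nhds ((N : ℝ)⁻¹ * ∑ j, x0 j)) := by
  classical
  obtain ⟨hγ0, hγ1⟩ := hγ
  have hN0 : 0 < N := by
    rcases hG.nonempty with ⟨i⟩; exact i.pos
  have hM0 : 0 < M := lt_of_lt_of_le (Nat.succ_pos p₀) hp₀
  have hNne : (N:ℝ) ≠ 0 := Nat.cast_ne_zero.2 hN0.ne'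
  have hMne : (M:ℝ) ≠ 0 := Nat.cast_ne_zero.2 hM0.ne'
  obtain ⟨ε, hε, hpoin⟩ := PPAC.poincare G hG
  set rb : Fin M → ℝ := fun k =>
    (N:ℝ)⁻¹ * ∑ j, ((∑ ℓ : Fin p₀, a j ℓ * s k ^ ((ℓ:ℕ)+1)) + x0 j) with hrb_def
  have hrb_fix : (projMat M p₀ s).mulVec rb = rb := by
    set y : Fin (p₀+1) → ℝ := fun ℓ =>
      Fin.cases ((N:ℝ)⁻¹ * ∑ j, x0 j) (fun ℓ' => (N:ℝ)⁻¹ * ∑ j, a j ℓ') ℓ with hy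
    have hspan : rb = (vandMat M p₀ s).mulVec y := by
      funext k
      rw [Matrix.mulVec, dotProduct, Fin.sum_univ_succ]
      simp only [hy, vandMat, Matrix.of_apply, Fin.val_zero, pow_zero, one_mul,
        Fin.cases_zero, Fin.cases_succ, Fin.val_succ]
      simp only [hrb_def]
      rw [Finset.sum_add_distrib, mul_add, add_comm]
      congr 1
      rw [Finset.sum_comm (f := fun (j : Fin N) (ℓ : Fin p₀) => a j ℓ * s k ^ ((ℓ:ℕ)+1))]
      rw [Finset.mul_sum _ _ ((N:ℝ)⁻¹)]
      refine Finset.sum_congr rfl (fun ℓ _ => ?_)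
      rw [← Finset.sum_mul]
      ring
    rw [hspan]
    exact PPAC.proj_fix hs_inj hp₀ y
  have hFact : ∀ t : ℕ, ∃ F : (Fin t → Sym2 (Fin N) → Fin M) → (Fin N → Fin M → ℝ),
      ∀ ω, r t ω = F (fun i : Fin t => c (i:ℕ) ω) := by
    intro t
    induction t with
    | zero =>
      refine ⟨fun _ => fun i k => (∑ ℓ : Fin p₀, a i ℓ * s k ^ ((ℓ:ℕ)+1)) + x0 i, fun ω => ?_⟩
      funext i k
      exact hr_init ω i k
    | succ t ih =>
      obtain ⟨F, hF⟩ := ih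
      refine ⟨fun v => fun i => (projMat M p₀ s).mulVec
        (fun k => F (fun i' => v i'.castSucc) i k + γ * ∑ j ∈ G.neighborFinset i,
          (if v (Fin.last t) s(i, j) = k then (1:ℝ) else 0) *
            (F (fun i' => v i'.castSucc) j k - F (fun i' => v i'.castSucc) i k)), fun ω => ?_⟩
      funext i
      rw [hr_upd t ω i, hF ω]
      rfl
  set V : ℕ → Ω → ℝ := fun t ω => ∑ i, ∑ k, (r t ω i k - rb k)^2 with hV_def
  set W : ℕ → Ω → ℝ := fun t ω =>
    ∑ k, ∑ i, ∑ j ∈ G.neighborFinset i, (r t ω i k - r t ω j k)^2 with hW_def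
  set Dir : ℕ → Ω → ℝ := fun t ω =>
    ∑ k, ∑ i, ∑ j ∈ G.neighborFinset i,
      (if c t ω s(i, j) = k then (1:ℝ) else 0) * (r t ω i k - r t ω j k)^2 with hDir_def
  have hVnn : ∀ t ω, 0 ≤ V t ω := fun t ω =>
    Finset.sum_nonneg fun i _ => Finset.sum_nonneg fun k _ => sq_nonneg _
  have hVfact : ∀ t, ∃ Θ : (Fin t → Sym2 (Fin N) → Fin M) → ℝ,
      V t = fun ω => Θ (fun i : Fin t => c (i:ℕ) ω) := by
    intro t
    obtain ⟨F, hF⟩ := hFact t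
    refine ⟨fun v => ∑ i, ∑ k, (F v i k - rb k)^2, ?_⟩
    funext ω
    simp only [hV_def]
    rw [hF ω]
  have hWfact : ∀ t, ∃ Θ : (Fin t → Sym2 (Fin N) → Fin M) → ℝ,
      W t = fun ω => Θ (fun i : Fin t => c (i:ℕ) ω) := by
    intro t
    obtain ⟨F, hF⟩ := hFact t
    refine ⟨fun v => ∑ k, ∑ i, ∑ j ∈ G.neighborFinset i, (F v i k - F v j k)^2, ?_⟩
    funext ω
    simp only [hW_def]
    rw [hF ω]
  have hVmeas : ∀ t, Measurable (V t) := by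
    intro t
    obtain ⟨Θ, hΘ⟩ := hVfact t
    rw [hΘ]
    exact PPAC.factor_measurable hc_meas t Θ
  have hVint : ∀ t, Integrable (V t) μ := by
    intro t
    obtain ⟨Θ, hΘ⟩ := hVfact t
    rw [hΘ]
    exact PPAC.factor_integrable hM0 hc_meas t Θ
  have hWint : ∀ t, Integrable (W t) μ := by
    intro t
    obtain ⟨Θ, hΘ⟩ := hWfact t
    rw [hΘ]
    exact PPAC.factor_integrable hM0 hc_meas t Θ
  have hDirfact : ∀ t, ∃ Θ : (Fin (t+1) → Sym2 (Fin N) → Fin M) → ℝ,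
      Dir t = fun ω => Θ (fun i : Fin (t+1) => c (i:ℕ) ω) := by
    intro t
    obtain ⟨F, hF⟩ := hFact t
    refine ⟨fun v => ∑ k, ∑ i, ∑ j ∈ G.neighborFinset i,
      (if v (Fin.last t) s(i, j) = k then (1:ℝ) else 0) *
        (F (fun i' => v i'.castSucc) i k - F (fun i' => v i'.castSucc) j k)^2, ?_⟩
    funext ω
    simp only [hDir_def]
    rw [hF ω]
    rfl
  have hDirint : ∀ t, Integrable (Dir t) μ := by
    intro t
    obtain ⟨Θ, hΘ⟩ := hDirfact t
    rw [hΘ]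
    exact PPAC.factor_integrable hM0 hc_meas (t+1) Θ
  have hgood : ∀ᵐ ω ∂μ, ∀ t, PPAC.ProperAt G (c t ω) :=
    ae_all_iff.2 fun t => (hc_proper t).mono fun ω h => PPAC.properAt_of_proper h
  have hsuminv : ∀ᵐ ω ∂μ, ∀ t k, ∑ i, r t ω i k = (N:ℝ) * rb k := by
    filter_upwards [hgood] with ω hω
    intro t
    induction t with
    | zero =>
      intro k
      have h0 : ∑ i, r 0 ω i k
          = ∑ i, ((∑ ℓ : Fin p₀, a i ℓ * s k ^ ((ℓ:ℕ)+1)) + x0 i) :=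
        Finset.sum_congr rfl (fun i _ => hr_init ω i k)
      rw [h0, hrb_def, ← mul_assoc, mul_inv_cancel₀ hNne, one_mul]
    | succ t ih =>
      intro k
      have hprop := hω t
      have h1 : ∀ i : Fin N, r (t+1) ω i k = ∑ k', projMat M p₀ s k k' *
          (r t ω i k' + γ * ∑ j ∈ G.neighborFinset i,
            (if c t ω s(i,j) = k' then (1:ℝ) else 0) * (r t ω j k' - r t ω i k')) := by
        intro i
        rw [hr_upd t ω i]
        rfl
      rw [Finset.sum_congr rfl (fun i _ => h1 i), Finset.sum_comm]
      have h2 : ∀ k' : Fin M, (∑ i, projMat M p₀ s k k' *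
          (r t ω i k' + γ * ∑ j ∈ G.neighborFinset i,
            (if c t ω s(i,j) = k' then (1:ℝ) else 0) * (r t ω j k' - r t ω i k')))
          = projMat M p₀ s k k' * ((N:ℝ) * rb k') := by
        intro k'
        rw [← Finset.mul_sum]
        congr 1
        rw [PPAC.step_sum_invariant hprop γ (r t ω) k']
        exact ih k'
      rw [Finset.sum_congr rfl (fun k' _ => h2 k')]
      have h3 : ∑ k', projMat M p₀ s k k' * ((N:ℝ) * rb k')
          = (N:ℝ) * ∑ k', projMat M p₀ s k k' * rb k' := by
        rw [Finset.mul_sum]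
        exact Finset.sum_congr rfl fun k' _ => by ring
      rw [h3]
      congr 1
      have h4 := congrFun hrb_fix k
      rw [← h4]
      rfl
  have hstep : ∀ᵐ ω ∂μ, ∀ t, V (t+1) ω ≤ V t ω - γ*(1-γ) * Dir t ω := by
    filter_upwards [hgood] with ω hω
    intro t
    have := PPAC.step_decrease (G := G) (col := c t ω) hs_inj hp₀ (hω t) γ
      (r t ω) (r (t+1) ω) rb hrb_fix (fun i => hr_upd t ω i)
    simp only [hV_def, hDir_def]
    exact this
  have hpoinae : ∀ᵐ ω ∂μ, ∀ t, ε * V t ω ≤ W t ω := by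
    filter_upwards [hsuminv] with ω hω
    intro t
    have hVc : V t ω = ∑ k, ∑ i, (r t ω i k - rb k)^2 := by
      simp only [hV_def]
      exact Finset.sum_comm
    rw [hVc, hW_def, Finset.mul_sum]
    refine Finset.sum_le_sum (fun k _ => ?_)
    have hsum0 : ∑ i, (r t ω i k - rb k) = 0 := by
      rw [Finset.sum_sub_distrib, hω t k, Finset.sum_const, Finset.card_univ,
        Fintype.card_fin, nsmul_eq_mul, sub_self]
    have := hpoin (fun i => r t ω i k - rb k) hsum0
    refine le_trans this (le_of_eq ?_)
    refine Finset.sum_congr rfl (fun i _ => Finset.sum_congr rfl (fun j _ => ?_))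
    rw [sub_sub_sub_cancel_right]
  have hDirW : ∀ t, ∫ ω, Dir t ω ∂μ = (M:ℝ)⁻¹ * ∫ ω, W t ω ∂μ := by
    intro t
    obtain ⟨F, hF⟩ := hFact t
    -- integrability of individual difference-square terms
    have hdint : ∀ (i j : Fin N) (k : Fin M),
        Integrable (fun ω => (r t ω i k - r t ω j k)^2) μ := by
      intro i j k
      have : (fun ω => (r t ω i k - r t ω j k)^2)
          = fun ω => (fun v => (F v i k - F v j k)^2) (fun i' : Fin t => c (i':ℕ) ω) := by
        funext ω; rw [hF ω]
      rw [this]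
      exact PPAC.factor_integrable (μ := μ) hM0 hc_meas t (fun v => (F v i k - F v j k)^2)
    have hterm_int : ∀ (k : Fin M) (i j : Fin N),
        Integrable (fun ω => (if c t ω s(i,j) = k then (1:ℝ) else 0)
          * (r t ω i k - r t ω j k)^2) μ := by
      intro k i j
      have : (fun ω => (if c t ω s(i,j) = k then (1:ℝ) else 0) * (r t ω i k - r t ω j k)^2)
          = fun ω => (fun v : Fin (t+1) → Sym2 (Fin N) → Fin M =>
              (if v (Fin.last t) s(i,j) = k then (1:ℝ) else 0) *
                (F (fun i' => v i'.castSucc) i k - F (fun i' => v i'.castSucc) j k)^2)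
            (fun i' : Fin (t+1) => c (i':ℕ) ω) := by
        funext ω; rw [hF ω]; rfl
      rw [this]
      exact PPAC.factor_integrable (μ := μ) hM0 hc_meas (t+1)
        (fun v : Fin (t+1) → Sym2 (Fin N) → Fin M =>
          (if v (Fin.last t) s(i,j) = k then (1:ℝ) else 0) *
            (F (fun i' => v i'.castSucc) i k - F (fun i' => v i'.castSucc) j k)^2)
    have hkey : ∀ (k : Fin M) (i : Fin N), ∀ j ∈ G.neighborFinset i,
        ∫ ω, (if c t ω s(i,j) = k then (1:ℝ) else 0) * (r t ω i k - r t ω j k)^2 ∂μ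
          = (M:ℝ)⁻¹ * ∫ ω, (r t ω i k - r t ω j k)^2 ∂μ := by
      intro k i j hj
      have hedge : s(i,j) ∈ G.edgeSet := G.mem_edgeSet.2 ((G.mem_neighborFinset i j).1 hj)
      have hμ : μ {ω | c t ω s(i,j) = k} = 1 / (M:ENNReal) := hc_unif t _ hedge k
      have htoReal : (μ {ω | c t ω s(i,j) = k}).toReal = (M:ℝ)⁻¹ := by
        rw [hμ, one_div, ENNReal.toReal_inv, ENNReal.toReal_natCast]
      have heq : (fun ω => (r t ω i k - r t ω j k)^2)
          = fun ω => (fun v => (F v i k - F v j k)^2) (fun i' : Fin t => c (i':ℕ) ω) := by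
        funext ω; rw [hF ω]
      have := PPAC.key_integral (μ := μ) hM0 hc_meas hc_indep t
        (fun v => (F v i k - F v j k)^2) s(i,j) k
      rw [htoReal] at this
      calc ∫ ω, (if c t ω s(i,j) = k then (1:ℝ) else 0) * (r t ω i k - r t ω j k)^2 ∂μ
          = ∫ ω, (if c t ω s(i,j) = k then (1:ℝ) else 0)
              * (fun v => (F v i k - F v j k)^2) (fun i' : Fin t => c (i':ℕ) ω) ∂μ := by
            congr 1; funext ω; rw [hF ω]
        _ = (M:ℝ)⁻¹ * ∫ ω, (fun v => (F v i k - F v j k)^2)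
              (fun i' : Fin t => c (i':ℕ) ω) ∂μ := this
        _ = (M:ℝ)⁻¹ * ∫ ω, (r t ω i k - r t ω j k)^2 ∂μ := by
            rw [← heq]
    -- expand the integral of Dir
    simp only [hDir_def, hW_def]
    rw [integral_finset_sum _ (fun k _ => integrable_finset_sum _
      (fun i _ => integrable_finset_sum _ (fun j _ => hterm_int k i j)))]
    rw [integral_finset_sum _ (fun k _ => integrable_finset_sum _
      (fun i _ => integrable_finset_sum _ (fun j _ => hdint i j k)))]
    rw [Finset.mul_sum]
    refine Finset.sum_congr rfl (fun k _ => ?_)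
    rw [integral_finset_sum _ (fun i _ => integrable_finset_sum _ (fun j _ => hterm_int k i j))]
    rw [integral_finset_sum _ (fun i _ => integrable_finset_sum _ (fun j _ => hdint i j k))]
    rw [Finset.mul_sum]
    refine Finset.sum_congr rfl (fun i _ => ?_)
    rw [integral_finset_sum _ (fun j hj => hterm_int k i j)]
    rw [integral_finset_sum _ (fun j hj => hdint i j k)]
    rw [Finset.mul_sum]
    exact Finset.sum_congr rfl (fun j hj => hkey k i j hj)
  set ρ : ℝ := max 0 (1 - γ*(1-γ)*ε/M) with hρ_def
  have hρ0 : 0 ≤ ρ := le_max_left _ _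
  have hρ1 : ρ < 1 := by
    apply max_lt one_pos
    have : 0 < γ*(1-γ)*ε/M := by
      apply div_pos
      · apply mul_pos (mul_pos hγ0 (by linarith)) hε
      · exact_mod_cast hM0
    linarith
  have hVrec : ∀ t, ∫ ω, V (t+1) ω ∂μ ≤ ρ * ∫ ω, V t ω ∂μ := by
    intro t
    have hVtnn : 0 ≤ ∫ ω, V t ω ∂μ := integral_nonneg (fun ω => hVnn t ω)
    have h1 : ∫ ω, V (t+1) ω ∂μ ≤ ∫ ω, (V t ω - γ*(1-γ) * Dir t ω) ∂μ := by
      apply integral_mono_ae (hVint (t+1)) ((hVint t).sub (((hDirint t).const_mul _)))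
      filter_upwards [hstep] with ω h
      exact h t
    have h2 : ∫ ω, (V t ω - γ*(1-γ) * Dir t ω) ∂μ
        = ∫ ω, V t ω ∂μ - γ*(1-γ) * ∫ ω, Dir t ω ∂μ := by
      rw [integral_sub (hVint t) ((hDirint t).const_mul _), MeasureTheory.integral_const_mul]
    have h4 : ε * ∫ ω, V t ω ∂μ ≤ ∫ ω, W t ω ∂μ := by
      rw [← MeasureTheory.integral_const_mul]
      apply integral_mono_ae ((hVint t).const_mul ε) (hWint t)
      filter_upwards [hpoinae] with ω h
      exact h t
    have hcoeff : 0 ≤ γ*(1-γ) := le_of_lt (mul_pos hγ0 (by linarith))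
    have hMinv : (0:ℝ) ≤ (M:ℝ)⁻¹ := by positivity
    calc ∫ ω, V (t+1) ω ∂μ
        ≤ ∫ ω, V t ω ∂μ - γ*(1-γ) * ((M:ℝ)⁻¹ * ∫ ω, W t ω ∂μ) := by
          rw [← hDirW t]; rw [h2] at h1; exact h1
      _ ≤ ∫ ω, V t ω ∂μ - γ*(1-γ) * ((M:ℝ)⁻¹ * (ε * ∫ ω, V t ω ∂μ)) := by
          apply sub_le_sub_left
          exact mul_le_mul_of_nonneg_left (mul_le_mul_of_nonneg_left h4 hMinv) hcoeff
      _ = (1 - γ*(1-γ)*ε/M) * ∫ ω, V t ω ∂μ := by ring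
      _ ≤ ρ * ∫ ω, V t ω ∂μ := mul_le_mul_of_nonneg_right (le_max_right _ _) hVtnn
  have hVbound : ∀ t, ∫ ω, V t ω ∂μ ≤ ρ^t * ∫ ω, V 0 ω ∂μ := by
    intro t
    induction t with
    | zero => simp
    | succ t ih =>
      calc ∫ ω, V (t+1) ω ∂μ ≤ ρ * ∫ ω, V t ω ∂μ := hVrec t
        _ ≤ ρ * (ρ^t * ∫ ω, V 0 ω ∂μ) := by
            apply mul_le_mul_of_nonneg_left ih hρ0
        _ = ρ^(t+1) * ∫ ω, V 0 ω ∂μ := by ring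
  have hVtend : ∀ᵐ ω ∂μ, Tendsto (fun t => V t ω) atTop (nhds 0) := by
    have hlint : ∀ t, ∫⁻ ω, ENNReal.ofReal (V t ω) ∂μ = ENNReal.ofReal (∫ ω, V t ω ∂μ) :=
      fun t => (ofReal_integral_eq_lintegral_ofReal (hVint t)
        (Filter.Eventually.of_forall (fun ω => hVnn t ω))).symm
    set C : ℝ := ∫ ω, V 0 ω ∂μ with hC
    have hC0 : 0 ≤ C := integral_nonneg (fun ω => hVnn 0 ω)
    have htsum : ∑' t, ∫⁻ ω, ENNReal.ofReal (V t ω) ∂μ ≠ ⊤ := by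
      have hle : ∀ t, ∫⁻ ω, ENNReal.ofReal (V t ω) ∂μ
          ≤ (ENNReal.ofReal ρ)^t * ENNReal.ofReal C := by
        intro t
        rw [hlint t]
        calc ENNReal.ofReal (∫ ω, V t ω ∂μ) ≤ ENNReal.ofReal (ρ^t * C) :=
              ENNReal.ofReal_le_ofReal (hVbound t)
          _ = (ENNReal.ofReal ρ)^t * ENNReal.ofReal C := by
              rw [ENNReal.ofReal_mul (pow_nonneg hρ0 t), ENNReal.ofReal_pow hρ0]
      refine ne_top_of_le_ne_top ?_ (ENNReal.tsum_le_tsum hle)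
      rw [ENNReal.tsum_mul_right, ENNReal.tsum_geometric]
      apply ENNReal.mul_ne_top
      · rw [Ne, ENNReal.inv_eq_top, tsub_eq_zero_iff_le]
        exact fun h => absurd (lt_of_lt_of_le (ENNReal.ofReal_lt_one.2 hρ1) h) (lt_irrefl _)
      · exact ENNReal.ofReal_ne_top
    have hswap : ∫⁻ ω, (∑' t, ENNReal.ofReal (V t ω)) ∂μ
        = ∑' t, ∫⁻ ω, ENNReal.ofReal (V t ω) ∂μ :=
      lintegral_tsum (fun t => ((hVmeas t).ennreal_ofReal).aemeasurable)
    have hfin : ∀ᵐ ω ∂μ, (∑' t, ENNReal.ofReal (V t ω)) < ⊤ := by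
      apply ae_lt_top (Measurable.ennreal_tsum (fun t => (hVmeas t).ennreal_ofReal))
      rw [hswap]
      exact htsum
    filter_upwards [hfin] with ω hω
    have h1 : Tendsto (fun t => ENNReal.ofReal (V t ω)) atTop (nhds 0) :=
      ENNReal.tendsto_atTop_zero_of_tsum_ne_top hω.ne
    have h2 : Tendsto (fun t => (ENNReal.ofReal (V t ω)).toReal) atTop (nhds 0) := by
      have := (ENNReal.tendsto_toReal (a := 0) (by simp)).comp h1
      simpa [Function.comp_def] using this
    refine h2.congr (fun t => ?_)
    exact ENNReal.toReal_ofReal (hVnn t ω)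
  filter_upwards [hVtend] with ω hVω
  intro i
  have hrk : ∀ k, Tendsto (fun t => r t ω i k) atTop (nhds (rb k)) := by
    intro k
    have hsq : ∀ t, (r t ω i k - rb k)^2 ≤ V t ω := by
      intro t
      have h1 : (r t ω i k - rb k)^2 ≤ ∑ k', (r t ω i k' - rb k')^2 :=
        Finset.single_le_sum (f := fun k' => (r t ω i k' - rb k')^2)
          (fun k' _ => sq_nonneg _) (Finset.mem_univ k)
      have h2 : ∑ k', (r t ω i k' - rb k')^2 ≤ ∑ i', ∑ k', (r t ω i' k' - rb k')^2 :=
        Finset.single_le_sum (f := fun i' => ∑ k', (r t ω i' k' - rb k')^2)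
          (fun i' _ => Finset.sum_nonneg (fun k' _ => sq_nonneg _)) (Finset.mem_univ i)
      exact h1.trans h2
    have h0 : Tendsto (fun t => (r t ω i k - rb k)^2) atTop (nhds 0) :=
      squeeze_zero (fun t => sq_nonneg _) hsq hVω
    have habs : Tendsto (fun t => |r t ω i k - rb k|) atTop (nhds 0) := by
      have := (Real.continuous_sqrt.tendsto 0).comp h0
      simp only [Function.comp_def, Real.sqrt_sq_eq_abs, Real.sqrt_zero] at this
      exact this
    have hd : Tendsto (fun t => r t ω i k - rb k) atTop (nhds 0) := by
      have hneg : Tendsto (fun t => -|r t ω i k - rb k|) atTop (nhds 0) := by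
        simpa using habs.neg
      exact tendsto_of_tendsto_of_tendsto_of_le_of_le hneg habs
        (fun t => neg_abs_le _) (fun t => le_abs_self _)
    have := hd.add_const (rb k)
    simpa using this
  have hlim : Tendsto (fun t => ∑ k, r t ω i k * PPAC.lagW s k) atTop
      (nhds (∑ k, rb k * PPAC.lagW s k)) :=
    tendsto_finset_sum _ (fun k _ => (hrk k).mul_const _)
  have hfinal : ∑ k, rb k * PPAC.lagW s k = (N:ℝ)⁻¹ * ∑ j, x0 j :=
    PPAC.rb_lagrange hs_inj (lt_of_lt_of_le (Nat.lt_succ_self p₀) hp₀) a x0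
  rw [hfinal] at hlim
  exact hlim
end
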